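/- arXiv:1806.04369 — 2 statements merged into one kernel-verified Lean document; each statement's English description precedes it below -/
import Mathlib

section
/- Let p be an odd prime, let d, e, f be positive integers with either 1 ≤ d ≤ f ≤ e ≤ d+f or 1 ≤ f < d < e ≤ d+f, and let G = M₁(p,d,e,f) with canonical generators a, b. For integers i, j, k, l, set α = bⁱaʲ and β = bᵏaˡ. If d = e, then (α, β) is an exact (p^d, p^e)-bicyclic pair of G if and only if il − jk ≢ 0 (mod p). If d < e, then (α, β) is an exact (p^d, p^e)-bicyclic pair of G if and only if p^{e−d} ∣ j and p ∤ il. -/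
/-- Relators for the group `M₁(p,d,e,f) = ⟨a, b ∣ a^(p^e) = b^(p^d) = 1, b⁻¹ab = a^(1+p^f)⟩`,
where `a` is generator `0` and `b` is generator `1`. -/
def M1rels (p d e f : ℕ) : Set (FreeGroup (Fin 2)) :=
  {FreeGroup.of 0 ^ p ^ e, FreeGroup.of 1 ^ p ^ d,
    (FreeGroup.of 1)⁻¹ * FreeGroup.of 0 * FreeGroup.of 1 * (FreeGroup.of 0 ^ (1 + p ^ f))⁻¹}

/-- The metacyclic group `M₁(p,d,e,f) = ⟨a, b ∣ a^(p^e) = b^(p^d) = 1, b⁻¹ab = a^(1+p^f)⟩`. -/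
abbrev M1 (p d e f : ℕ) : Type := PresentedGroup (M1rels p d e f)

/-- The canonical generator `a` of `M₁(p,d,e,f)`. -/
def M1a (p d e f : ℕ) : M1 p d e f := PresentedGroup.of 0

/-- The canonical generator `b` of `M₁(p,d,e,f)`. -/
def M1b (p d e f : ℕ) : M1 p d e f := PresentedGroup.of 1

/-- Relators for the group `M₂(p,d,e,f) = ⟨a, b ∣ a^(p^d) = b^(p^e) = 1, b⁻¹ab = a^(1+p^f)⟩`,
where `a` is generator `0` and `b` is generator `1`. -/
def M2rels (p d e f : ℕ) : Set (FreeGroup (Fin 2)) :=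
  {FreeGroup.of 0 ^ p ^ d, FreeGroup.of 1 ^ p ^ e,
    (FreeGroup.of 1)⁻¹ * FreeGroup.of 0 * FreeGroup.of 1 * (FreeGroup.of 0 ^ (1 + p ^ f))⁻¹}

/-- The metacyclic group `M₂(p,d,e,f) = ⟨a, b ∣ a^(p^d) = b^(p^e) = 1, b⁻¹ab = a^(1+p^f)⟩`. -/
abbrev M2 (p d e f : ℕ) : Type := PresentedGroup (M2rels p d e f)

/-- The canonical generator `a` of `M₂(p,d,e,f)`. -/
def M2a (p d e f : ℕ) : M2 p d e f := PresentedGroup.of 0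

/-- The canonical generator `b` of `M₂(p,d,e,f)`. -/
def M2b (p d e f : ℕ) : M2 p d e f := PresentedGroup.of 1

/-- Relators for the group
`M₃(p,d,e,h,f) = ⟨a, b ∣ a^(p^h) = 1, b^(p^(d+e-h)) = a^(p^d), b⁻¹ab = a^(1+p^f)⟩`,
where `a` is generator `0` and `b` is generator `1`. -/
def M3rels (p d e h f : ℕ) : Set (FreeGroup (Fin 2)) :=
  {FreeGroup.of 0 ^ p ^ h, FreeGroup.of 1 ^ p ^ (d + e - h) * (FreeGroup.of 0 ^ p ^ d)⁻¹,
    (FreeGroup.of 1)⁻¹ * FreeGroup.of 0 * FreeGroup.of 1 * (FreeGroup.of 0 ^ (1 + p ^ f))⁻¹}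

/-- The non-split metacyclic group
`M₃(p,d,e,h,f) = ⟨a, b ∣ a^(p^h) = 1, b^(p^(d+e-h)) = a^(p^d), b⁻¹ab = a^(1+p^f)⟩`. -/
abbrev M3 (p d e h f : ℕ) : Type := PresentedGroup (M3rels p d e h f)

/-- The canonical generator `a` of `M₃(p,d,e,h,f)`. -/
def M3a (p d e h f : ℕ) : M3 p d e h f := PresentedGroup.of 0

/-- The canonical generator `b` of `M₃(p,d,e,h,f)`. -/
def M3b (p d e h f : ℕ) : M3 p d e h f := PresentedGroup.of 1

/-- `(α, β)` is an exact `(m,n)`-bicyclic pair of `G`: `α` has order `m`, `β` has order `n`,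
`⟨α⟩ ∩ ⟨β⟩ = 1`, and `G = ⟨α⟩⟨β⟩`. -/
def IsExactBicyclicPair {G : Type*} [Group G] (m n : ℕ) (α β : G) : Prop :=
  orderOf α = m ∧ orderOf β = n ∧
    Subgroup.zpowers α ⊓ Subgroup.zpowers β = ⊥ ∧
    ∀ g : G, ∃ i j : ℤ, g = α ^ i * β ^ j


namespace Stmt6
open Finset

lemma geom_sum_mul_range {R : Type*} [CommRing R] (w : R) (a b : ℕ) :
    ∑ t ∈ range (a * b), w ^ t =
      (∑ q ∈ range b, (w ^ a) ^ q) * ∑ r ∈ range a, w ^ r := by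
  induction b with
  | zero => simp
  | succ b ih =>
      rw [Nat.mul_succ, Finset.sum_range_add, ih, Finset.sum_range_succ, add_mul]
      congr 1
      rw [Finset.mul_sum]
      refine Finset.sum_congr rfl fun x hx => ?_
      rw [pow_add, ← pow_mul, mul_comm a b]

lemma sub_one_dvd_pow_sub_one (w : ℤ) (k : ℕ) : (w - 1) ∣ w ^ k - 1 :=
  ⟨∑ t ∈ range k, w ^ t, by rw [← geom_sum_mul w k, mul_comm]⟩

lemma geom_sum_p {p : ℕ} (hodd : Odd p) {w : ℤ} (h : (p : ℤ) ∣ w - 1) :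
    ∃ z : ℤ, ∑ t ∈ range p, w ^ t = p + p ^ 2 * z := by
  obtain ⟨c, hc⟩ := h
  have hw : w = 1 + p * c := by linarith
  have hterm : ∀ t : ℕ, ∃ z : ℤ, w ^ t = 1 + t * (p * c) + p ^ 2 * z := by
    intro t
    induction t with
    | zero => exact ⟨0, by simp⟩
    | succ t ih =>
        obtain ⟨z, hz⟩ := ih
        refine ⟨t * c ^ 2 + z * (1 + p * c), ?_⟩
        rw [pow_succ, hz, hw]; push_cast; ring
  have hsum : ∀ n : ℕ, ∃ z : ℤ,
      ∑ t ∈ range n, w ^ t = n + (∑ t ∈ range n, (t : ℤ)) * (p * c) + p ^ 2 * z := by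
    intro n
    induction n with
    | zero => exact ⟨0, by simp⟩
    | succ n ih =>
        obtain ⟨z, hz⟩ := ih
        obtain ⟨z', hz'⟩ := hterm n
        refine ⟨z + z', ?_⟩
        rw [Finset.sum_range_succ, hz, Finset.sum_range_succ, hz']
        push_cast; ring
  obtain ⟨q, hq⟩ := hodd
  have hid : (∑ t ∈ range p, (t : ℤ)) = p * q := by
    have h2 : (∑ i ∈ range p, i) * 2 = p * (2 * q) := by
      rw [Finset.sum_range_id_mul_two]
      congr 1
      omega
    have h3 : (∑ i ∈ range p, i) = p * q := by
      have h4 : (∑ i ∈ range p, i) * 2 = (p * q) * 2 := by rw [h2]; ring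
      exact Nat.eq_of_mul_eq_mul_right (by norm_num) h4
    rw [← Nat.cast_sum, h3]; push_cast; ring
  obtain ⟨z, hz⟩ := hsum p
  exact ⟨q * c + z, by rw [hz, hid]; ring⟩

lemma pow_p_sub_one {p : ℕ} (hodd : Odd p) {w : ℤ} {g : ℕ} (hg : 1 ≤ g)
    (h : (p : ℤ) ^ g ∣ w - 1) : (p : ℤ) ^ (g + 1) ∣ w ^ p - 1 := by
  have hp1 : (p : ℤ) ∣ w - 1 := dvd_trans (by simpa using pow_dvd_pow (p : ℤ) hg) h
  obtain ⟨z, hz⟩ := geom_sum_p hodd hp1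
  obtain ⟨c, hc⟩ := h
  refine ⟨(1 + p * z) * c, ?_⟩
  rw [← geom_sum_mul w p, hz, hc]
  ring

lemma pow_pow_sub_one {p f : ℕ} (hodd : Odd p) (hf : 1 ≤ f) (m : ℕ) :
    (p : ℤ) ^ (f + m) ∣ (1 + (p : ℤ) ^ f) ^ p ^ m - 1 := by
  induction m with
  | zero => simp
  | succ m ih =>
      have := pow_p_sub_one hodd (g := f + m) (by omega) ih
      rw [← pow_mul, ← pow_succ] at this
      simpa [← add_assoc] using this

lemma geom_sum_p_pow {p : ℕ} (hodd : Odd p) {w : ℤ} (h : (p : ℤ) ∣ w - 1) (m : ℕ) :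
    ∃ z : ℤ, ∑ t ∈ range (p ^ m), w ^ t = p ^ m * (1 + p * z) := by
  induction m with
  | zero => exact ⟨0, by simp⟩
  | succ m ih =>
      obtain ⟨z2, hz2⟩ := ih
      have hpow : (p : ℤ) ∣ w ^ p ^ m - 1 :=
        dvd_trans h (sub_one_dvd_pow_sub_one w _)
      obtain ⟨z1, hz1⟩ := geom_sum_p hodd hpow
      refine ⟨z1 + z2 + p * z1 * z2, ?_⟩
      rw [pow_succ, geom_sum_mul_range, hz1, hz2]
      push_cast; ring

lemma geom_sum_mod_p {p : ℕ} {w : ℤ} (h : (p : ℤ) ∣ w - 1) (c : ℕ) :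
    ∃ z : ℤ, ∑ t ∈ range c, w ^ t = c + p * z := by
  induction c with
  | zero => exact ⟨0, by simp⟩
  | succ c ih =>
      obtain ⟨z, hz⟩ := ih
      obtain ⟨z', hz'⟩ := dvd_trans h (sub_one_dvd_pow_sub_one w c)
      refine ⟨z + z', ?_⟩
      rw [Finset.sum_range_succ, hz]
      push_cast
      linarith

end Stmt6
namespace Stmt6
set_option linter.unusedSectionVars false

/-- Bundled hypotheses. -/
class Hyp (p d e f : ℕ) : Prop where
  prime : p.Prime
  odd : Odd p
  hf : 1 ≤ f
  hd : 1 ≤ d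
  hde : d ≤ e
  hedf : e ≤ d + f

/-- The concrete model of `M₁(p,d,e,f)`: pairs `(x, y)` representing `b^y * a^x`. -/
@[ext] structure Gc (p d e f : ℕ) where
  x : ZMod (p ^ e)
  y : ZMod (p ^ d)

/-- The multiplier `1 + p^f` in `ZMod (p^e)`. -/
def wc (p e f : ℕ) : ZMod (p ^ e) := (1 + p ^ f : ℕ)

/-- The action exponent map. -/
def U (p d e f : ℕ) (y : ZMod (p ^ d)) : ZMod (p ^ e) := wc p e f ^ y.val

variable {p d e f : ℕ} [H : Hyp p d e f]
include H

lemma nez : NeZero p := ⟨H.prime.pos.ne'⟩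
lemma nezE : NeZero (p ^ e) := ⟨pow_ne_zero _ H.prime.pos.ne'⟩
lemma nezD : NeZero (p ^ d) := ⟨pow_ne_zero _ H.prime.pos.ne'⟩

lemma wc_pow_key : wc p e f ^ p ^ d = 1 := by
  have h1 : ((p ^ e : ℕ) : ℤ) ∣ (1 + (p : ℤ) ^ f) ^ p ^ d - 1 := by
    push_cast
    exact dvd_trans (pow_dvd_pow _ (show e ≤ f + d by have := H.hedf; omega))
      (pow_pow_sub_one H.odd H.hf d)
  have h2 := (ZMod.intCast_zmod_eq_zero_iff_dvd _ (p ^ e)).mpr h1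
  push_cast at h2
  rw [wc]
  push_cast
  linear_combination h2

lemma wc_pow_mod (n : ℕ) : wc p e f ^ (n % p ^ d) = wc p e f ^ n := by
  conv_rhs => rw [← Nat.div_add_mod n (p ^ d)]
  rw [pow_add, pow_mul, wc_pow_key (d := d), one_pow, one_mul]

lemma U_add (y1 y2 : ZMod (p ^ d)) : U p d e f (y1 + y2) = U p d e f y1 * U p d e f y2 := by
  haveI := nezD (p := p) (d := d) (e := e) (f := f)
  rw [U, U, U, ZMod.val_add, wc_pow_mod (d := d), pow_add]

lemma U_zero : U p d e f 0 = 1 := by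
  haveI := nezD (p := p) (d := d) (e := e) (f := f)
  rw [U, ZMod.val_zero, pow_zero]

lemma U_natCast (n : ℕ) : U p d e f (n : ZMod (p ^ d)) = wc p e f ^ n := by
  rw [U, ZMod.val_natCast, wc_pow_mod (d := d)]

lemma U_neg_mul (y : ZMod (p ^ d)) : U p d e f (-y) * U p d e f y = 1 := by
  rw [← U_add, neg_add_cancel, U_zero]

omit H

instance : One (Gc p d e f) := ⟨⟨0, 0⟩⟩
instance : Mul (Gc p d e f) := ⟨fun g h => ⟨g.x * U p d e f h.y + h.x, g.y + h.y⟩⟩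
instance : Inv (Gc p d e f) := ⟨fun g => ⟨-(g.x * U p d e f (-g.y)), -g.y⟩⟩

@[simp] lemma one_def : (1 : Gc p d e f) = ⟨0, 0⟩ := rfl
@[simp] lemma mul_def (g h : Gc p d e f) :
    g * h = ⟨g.x * U p d e f h.y + h.x, g.y + h.y⟩ := rfl
@[simp] lemma inv_def (g : Gc p d e f) :
    g⁻¹ = ⟨-(g.x * U p d e f (-g.y)), -g.y⟩ := rfl

include H in
instance : Group (Gc p d e f) where
  mul := (· * ·)
  one := 1
  inv := (·⁻¹)
  mul_assoc g h k := by
    simp only [mul_def, U_add]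
    ext <;> simp <;> ring
  one_mul g := by ext <;> simp
  mul_one g := by ext <;> simp [U_zero]
  inv_mul_cancel g := by
    have h := U_neg_mul (p := p) (d := d) (e := e) (f := f) g.y
    ext
    · simp only [mul_def, inv_def, one_def]
      linear_combination (-g.x) * h
    · simp [mul_def, inv_def, one_def]

end Stmt6
namespace Stmt6
open Finset
section
variable {p d e f : ℕ} [H : Hyp p d e f]

/-- generator `a` in the concrete model -/
def Ac (p d e f : ℕ) : Gc p d e f := ⟨1, 0⟩
/-- generator `b` in the concrete model -/
def Bc (p d e f : ℕ) : Gc p d e f := ⟨0, 1⟩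

include H

lemma pow_def (g : Gc p d e f) (n : ℕ) :
    g ^ n = ⟨g.x * ∑ t ∈ range n, U p d e f g.y ^ t, (n : ZMod (p ^ d)) * g.y⟩ := by
  induction n with
  | zero => ext <;> simp
  | succ n ih =>
      rw [pow_succ, ih]
      ext
      · simp only [mul_def, geom_sum_succ]
        ring
      · simp only [mul_def]
        push_cast
        ring

lemma Ac_pow (n : ℕ) : Ac p d e f ^ n = ⟨(n : ZMod (p ^ e)), 0⟩ := by
  rw [pow_def]
  ext
  · simp [Ac, U_zero (p := p) (d := d) (e := e) (f := f)]
  · simp [Ac]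

lemma Bc_pow (n : ℕ) : Bc p d e f ^ n = ⟨0, (n : ZMod (p ^ d))⟩ := by
  rw [pow_def]
  ext <;> simp [Bc]

lemma Ac_zpow (n : ℤ) : Ac p d e f ^ n = ⟨(n : ZMod (p ^ e)), 0⟩ := by
  cases n with
  | ofNat m =>
      show Ac p d e f ^ (m : ℤ) = _
      rw [zpow_natCast, Ac_pow]
      ext <;> push_cast <;> simp
  | negSucc m =>
      rw [zpow_negSucc, Ac_pow]
      ext
      · simp [inv_def, U_zero (p := p) (d := d) (e := e) (f := f), Int.cast_negSucc]
        try push_cast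
        try ring
      · simp [inv_def]

lemma Bc_zpow (n : ℤ) : Bc p d e f ^ n = ⟨0, (n : ZMod (p ^ d))⟩ := by
  cases n with
  | ofNat m =>
      show Bc p d e f ^ (m : ℤ) = _
      rw [zpow_natCast, Bc_pow]
      ext <;> push_cast <;> simp
  | negSucc m =>
      rw [zpow_negSucc, Bc_pow]
      ext
      · simp [inv_def]
      · simp [inv_def, Int.cast_negSucc]
        try push_cast
        try ring

omit H in
/-- the element `b^i * a^j` in the concrete model -/
def abc (p d e f : ℕ) [Hyp p d e f] (i j : ℤ) : Gc p d e f :=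
  Bc p d e f ^ i * Ac p d e f ^ j

lemma abc_def (i j : ℤ) :
    abc p d e f i j = ⟨(j : ZMod (p ^ e)), (i : ZMod (p ^ d))⟩ := by
  rw [abc, Ac_zpow, Bc_zpow]
  ext
  · simp [U_zero (p := p) (d := d) (e := e) (f := f)]
  · simp

omit H in
/-- integer representing `(1+p^f)^i` -/
def Wint (p d f : ℕ) (i : ℤ) : ℤ := (1 + (p : ℤ) ^ f) ^ ((i : ZMod (p ^ d)).val)

lemma W_sub_one (i : ℤ) : (p : ℤ) ∣ Wint p d f i - 1 := by
  have h1 : (p : ℤ) ∣ (1 + (p : ℤ) ^ f) - 1 := by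
    simpa using dvd_pow_self (p : ℤ) (Nat.one_le_iff_ne_zero.mp H.hf)
  exact h1.trans (sub_one_dvd_pow_sub_one _ _)

lemma U_int (i : ℤ) :
    U p d e f (i : ZMod (p ^ d)) = ((Wint p d f i : ℤ) : ZMod (p ^ e)) := by
  rw [U, Wint, wc]
  push_cast
  rfl

lemma abc_pow (i j : ℤ) (n : ℕ) :
    abc p d e f i j ^ n =
      ⟨((j * ∑ t ∈ range n, Wint p d f i ^ t : ℤ) : ZMod (p ^ e)),
       ((n * i : ℤ) : ZMod (p ^ d))⟩ := by
  rw [abc_def, pow_def]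
  ext
  · show (j : ZMod (p ^ e)) * ∑ t ∈ range n, U p d e f (i : ZMod (p ^ d)) ^ t = _
    rw [U_int]
    push_cast
    ring
  · show ((n : ZMod (p ^ d)) * (i : ZMod (p ^ d)) : ZMod (p ^ d)) = _
    push_cast
    ring

lemma abc_pow_eq_one (i j : ℤ) (n : ℕ) :
    (abc p d e f i j ^ n = 1) ↔
      ((p : ℤ) ^ e ∣ j * ∑ t ∈ range n, Wint p d f i ^ t) ∧ ((p : ℤ) ^ d ∣ n * i) := by
  rw [abc_pow, one_def, Gc.mk.injEq, ZMod.intCast_zmod_eq_zero_iff_dvd,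
    ZMod.intCast_zmod_eq_zero_iff_dvd]
  push_cast
  tauto

lemma dvd_helper {m : ℕ} (hm : m ≤ e) (j z : ℤ) :
    ((p : ℤ) ^ e ∣ j * ((p : ℤ) ^ m * (1 + p * z))) ↔ (p : ℤ) ^ (e - m) ∣ j := by
  have hp0 : (p : ℤ) ≠ 0 := by exact_mod_cast H.prime.pos.ne'
  have hco : IsCoprime ((p : ℤ) ^ (e - m)) (1 + p * z) :=
    (show IsCoprime (p : ℤ) (1 + p * z) from ⟨-z, 1, by ring⟩).pow_left
  constructor
  · intro h
    rw [show j * ((p : ℤ) ^ m * (1 + p * z)) = (p : ℤ) ^ m * (j * (1 + p * z)) by ring,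
      show ((p : ℤ)) ^ e = (p : ℤ) ^ m * (p : ℤ) ^ (e - m) by
        rw [← pow_add]; congr 1; omega] at h
    exact hco.dvd_of_dvd_mul_right ((mul_dvd_mul_iff_left (pow_ne_zero m hp0)).mp h)
  · rintro ⟨c, rfl⟩
    have hE : (p : ℤ) ^ e = (p : ℤ) ^ (e - m) * (p : ℤ) ^ m := by
      rw [← pow_add]; congr 1; omega
    exact ⟨c * (1 + p * z), by rw [hE]; ring⟩

lemma dvd_helper2 {m : ℕ} (hm : m ≤ d) (i0 : ℤ) :
    ((p : ℤ) ^ d ∣ (p : ℤ) ^ m * i0) ↔ (p : ℤ) ^ (d - m) ∣ i0 := by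
  have hp0 : (p : ℤ) ≠ 0 := by exact_mod_cast H.prime.pos.ne'
  rw [show ((p : ℤ)) ^ d = (p : ℤ) ^ m * (p : ℤ) ^ (d - m) by rw [← pow_add]; congr 1; omega]
  exact mul_dvd_mul_iff_left (pow_ne_zero m hp0)

lemma abc_pow_p_eq_one (i j : ℤ) {m : ℕ} (hme : m ≤ e) (hmd : m ≤ d) :
    (abc p d e f i j ^ p ^ m = 1) ↔ ((p : ℤ) ^ (e - m) ∣ j ∧ (p : ℤ) ^ (d - m) ∣ i) := by
  obtain ⟨z, hz⟩ := geom_sum_p_pow H.odd (W_sub_one (p := p) (d := d) (e := e) (f := f) i) m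
  rw [abc_pow_eq_one, hz, dvd_helper (d := d) (f := f) hme j z]
  have : ((p ^ m : ℕ) : ℤ) * i = (p : ℤ) ^ m * i := by push_cast; ring
  rw [this, dvd_helper2 (e := e) (f := f) hmd i]

lemma abc_pow_p_eq_one' (i j : ℤ) {m : ℕ} (hme : m ≤ e) (hmd : d ≤ m) :
    (abc p d e f i j ^ p ^ m = 1) ↔ (p : ℤ) ^ (e - m) ∣ j := by
  obtain ⟨z, hz⟩ := geom_sum_p_pow H.odd (W_sub_one (p := p) (d := d) (e := e) (f := f) i) m
  rw [abc_pow_eq_one, hz, dvd_helper (d := d) (f := f) hme j z]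
  have h2 : (p : ℤ) ^ d ∣ ((p ^ m : ℕ) : ℤ) * i := by
    push_cast
    exact dvd_mul_of_dvd_left (pow_dvd_pow _ hmd) i
  tauto

end

lemma orderOf_eq_pow_iff {p : ℕ} (hp : p.Prime) {G : Type*} [Group G] {g : G} {m : ℕ}
    (hm : 1 ≤ m) :
    orderOf g = p ^ m ↔ (g ^ p ^ m = 1 ∧ ¬ g ^ p ^ (m - 1) = 1) := by
  constructor
  · intro h
    refine ⟨by rw [← h]; exact pow_orderOf_eq_one g, fun h1 => ?_⟩
    have h2 := orderOf_dvd_of_pow_eq_one h1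
    rw [h] at h2
    have h3 := Nat.le_of_dvd (pow_pos hp.pos _) h2
    have h4 : p ^ (m - 1) < p ^ m := Nat.pow_lt_pow_right hp.one_lt (by omega)
    omega
  · rintro ⟨h1, h2⟩
    haveI : Fact p.Prime := ⟨hp⟩
    have h3 := orderOf_eq_prime_pow (n := m - 1) h2
      (by rw [show m - 1 + 1 = m by omega]; exact h1)
    rwa [show m - 1 + 1 = m by omega] at h3

section
variable {p d e f : ℕ} [H : Hyp p d e f]
include H

lemma orderOf_abc (i j : ℤ) :
    orderOf (abc p d e f i j) = p ^ d ↔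
      ((p : ℤ) ^ (e - d) ∣ j ∧ ¬ ((p : ℤ) ^ (e - d + 1) ∣ j ∧ (p : ℤ) ∣ i)) := by
  have hde := H.hde
  have hd := H.hd
  rw [orderOf_eq_pow_iff H.prime H.hd, abc_pow_p_eq_one i j H.hde le_rfl,
    abc_pow_p_eq_one i j (by omega) (by omega),
    show e - (d - 1) = e - d + 1 by omega, show d - (d - 1) = 1 by omega]
  simp [Nat.sub_self]

lemma orderOf_abc' (k l : ℤ) (hlt : d < e) :
    orderOf (abc p d e f k l) = p ^ e ↔ ¬ (p : ℤ) ∣ l := by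
  have hde := H.hde
  rw [orderOf_eq_pow_iff H.prime (by omega),
    abc_pow_p_eq_one' (p := p) (d := d) (e := e) (f := f) (m := e) k l le_rfl H.hde,
    abc_pow_p_eq_one' (p := p) (d := d) (e := e) (f := f) (m := e - 1) k l (by omega) (by omega),
    show e - (e - 1) = 1 by omega]
  simp [Nat.sub_self]

end
end Stmt6
namespace Stmt6
open Subgroup

section generic
variable {G : Type*} [Group G]

lemma zpow_val_eq {m : ℕ} [NeZero m] {α : G} (hα : orderOf α = m) (s : ℤ) :
    α ^ ((s : ZMod m).val : ℕ) = α ^ s := by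
  have hv : (((s : ZMod m).val : ℕ) : ℤ) = s % m := ZMod.val_intCast s
  have hm1 : α ^ ((m : ℤ) * (s / m) + s % m) = α ^ (s % m) := by
    rw [zpow_add, zpow_mul, zpow_natCast, ← hα, pow_orderOf_eq_one, one_zpow, one_mul]
  calc α ^ ((s : ZMod m).val : ℕ) = α ^ (((s : ZMod m).val : ℕ) : ℤ) := (zpow_natCast _ _).symm
    _ = α ^ (s % m) := by rw [hv]
    _ = α ^ ((m : ℤ) * (s / m) + s % m) := hm1.symm
    _ = α ^ s := by rw [Int.mul_ediv_add_emod s m]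

lemma inf_eq_bot_iff_cover {m n : ℕ} [NeZero m] [NeZero n] [Fintype G] {α β : G}
    (hα : orderOf α = m) (hβ : orderOf β = n) (hcard : Fintype.card G = m * n) :
    (zpowers α ⊓ zpowers β = ⊥) ↔ ∀ g : G, ∃ s t : ℤ, g = α ^ s * β ^ t := by
  set F : ZMod m × ZMod n → G := fun st => α ^ (st.1.val) * β ^ (st.2.val) with hF
  have hcard2 : Fintype.card (ZMod m × ZMod n) = Fintype.card G := by
    rw [Fintype.card_prod, ZMod.card, ZMod.card, hcard]
  constructor
  · intro hinf g
    have hinj : Function.Injective F := by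
      rintro ⟨s1, t1⟩ ⟨s2, t2⟩ hEq
      simp only [hF] at hEq
      have h3 : α ^ ((s1.val : ℤ) - s2.val) = β ^ ((t2.val : ℤ) - t1.val) := by
        have h4 : (α ^ s2.val)⁻¹ * (α ^ s1.val * β ^ t1.val) * (β ^ t1.val)⁻¹ =
            (α ^ s2.val)⁻¹ * (α ^ s2.val * β ^ t2.val) * (β ^ t1.val)⁻¹ := by rw [hEq]
        calc α ^ ((s1.val : ℤ) - s2.val)
            = (α ^ s2.val)⁻¹ * (α ^ s1.val * β ^ t1.val) * (β ^ t1.val)⁻¹ := by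
              rw [sub_eq_neg_add, zpow_add, zpow_neg, zpow_natCast, zpow_natCast]
              group
          _ = (α ^ s2.val)⁻¹ * (α ^ s2.val * β ^ t2.val) * (β ^ t1.val)⁻¹ := h4
          _ = β ^ ((t2.val : ℤ) - t1.val) := by
              rw [sub_eq_add_neg, zpow_add, zpow_neg, zpow_natCast, zpow_natCast]
              group
      have hmem : α ^ ((s1.val : ℤ) - s2.val) ∈ zpowers α ⊓ zpowers β := by
        rw [Subgroup.mem_inf]
        exact ⟨Subgroup.mem_zpowers_iff.mpr ⟨_, rfl⟩,
          Subgroup.mem_zpowers_iff.mpr ⟨_, h3.symm⟩⟩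
      rw [hinf, Subgroup.mem_bot] at hmem
      have hdvd1 : (m : ℤ) ∣ (s1.val : ℤ) - s2.val := by
        have h := orderOf_dvd_iff_zpow_eq_one.mpr hmem
        rw [hα] at h
        exact_mod_cast h
      have hdvd2 : (n : ℤ) ∣ (t2.val : ℤ) - t1.val := by
        have h := orderOf_dvd_iff_zpow_eq_one.mpr (h3 ▸ hmem)
        rw [hβ] at h
        exact_mod_cast h
      have hb1 := s1.val_lt
      have hb2 := s2.val_lt
      have hb3 := t1.val_lt
      have hb4 := t2.val_lt
      have hs : s1.val = s2.val := by
        obtain ⟨c, hc⟩ := hdvd1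
        have hmpos : (0 : ℤ) < (m : ℤ) := by exact_mod_cast Nat.pos_of_ne_zero (NeZero.ne m)
        have hlt1 : (m : ℤ) * c < (m : ℤ) * 1 := by rw [← hc]; push_cast; omega
        have hlt2 : (m : ℤ) * (-1) < (m : ℤ) * c := by rw [← hc]; push_cast; omega
        have hc1 : c < 1 := lt_of_mul_lt_mul_left hlt1 hmpos.le
        have hc2 : -1 < c := lt_of_mul_lt_mul_left hlt2 hmpos.le
        have hc0 : c = 0 := by omega
        rw [hc0, mul_zero] at hc
        omega
      have ht : t1.val = t2.val := by
        obtain ⟨c, hc⟩ := hdvd2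
        have hnpos : (0 : ℤ) < (n : ℤ) := by exact_mod_cast Nat.pos_of_ne_zero (NeZero.ne n)
        have hlt1 : (n : ℤ) * c < (n : ℤ) * 1 := by rw [← hc]; push_cast; omega
        have hlt2 : (n : ℤ) * (-1) < (n : ℤ) * c := by rw [← hc]; push_cast; omega
        have hc1 : c < 1 := lt_of_mul_lt_mul_left hlt1 hnpos.le
        have hc2 : -1 < c := lt_of_mul_lt_mul_left hlt2 hnpos.le
        have hc0 : c = 0 := by omega
        rw [hc0, mul_zero] at hc
        omega
      have e1 : s1 = s2 := ZMod.val_injective m hs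
      have e2 : t1 = t2 := ZMod.val_injective n ht
      simp [e1, e2]
    have hbij : Function.Bijective F :=
      (Fintype.bijective_iff_injective_and_card F).mpr ⟨hinj, hcard2⟩
    obtain ⟨⟨s, t⟩, hst⟩ := hbij.surjective g
    refine ⟨(s.val : ℤ), (t.val : ℤ), ?_⟩
    rw [← hst]
    simp only [hF]
    rw [zpow_natCast, zpow_natCast]
  · intro hcov
    have hsurj : Function.Surjective F := by
      intro g
      obtain ⟨s, t, rfl⟩ := hcov g
      exact ⟨((s : ZMod m), (t : ZMod n)), by
        simp only [hF]
        rw [zpow_val_eq hα, zpow_val_eq hβ]⟩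
    have hbij : Function.Bijective F :=
      (Fintype.bijective_iff_surjective_and_card F).mpr ⟨hsurj, hcard2⟩
    rw [Subgroup.eq_bot_iff_forall]
    intro x hx
    rw [Subgroup.mem_inf] at hx
    obtain ⟨hxa, hxb⟩ := hx
    obtain ⟨s, hs⟩ := Subgroup.mem_zpowers_iff.mp hxa
    obtain ⟨t, ht⟩ := Subgroup.mem_zpowers_iff.mp hxb
    have h1 : F ((s : ZMod m), 0) = x := by
      simp only [hF]
      rw [zpow_val_eq hα, ZMod.val_zero, pow_zero, mul_one, hs]
    have h2 : F (0, (t : ZMod n)) = x := by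
      simp only [hF]
      rw [zpow_val_eq hβ, ZMod.val_zero, pow_zero, one_mul, ht]
    have h3 := hbij.injective (h1.trans h2.symm)
    have hs0 : (s : ZMod m) = 0 := congrArg Prod.fst h3
    rw [ZMod.intCast_zmod_eq_zero_iff_dvd] at hs0
    rw [← hs]
    apply orderOf_dvd_iff_zpow_eq_one.mp
    rw [hα]
    exact hs0

lemma zpow_eq_pow_of_pow_eq_one {h : G} {p : ℕ} (hp : 0 < p) (h1 : h ^ p = 1) (z : ℤ) :
    ∃ c : ℕ, h ^ z = h ^ c := by
  refine ⟨(z % p).toNat, ?_⟩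
  have h0 : (0 : ℤ) ≤ z % p := Int.emod_nonneg z (by exact_mod_cast hp.ne')
  conv_lhs => rw [← Int.mul_ediv_add_emod z p]
  rw [zpow_add, zpow_mul, zpow_natCast, h1, one_zpow, one_mul, ← zpow_natCast,
    Int.toNat_of_nonneg h0]

lemma exists_zpow_of_pow_p {p : ℕ} (hp : p.Prime) {α : G} {m : ℕ} (hm : 1 ≤ m)
    (hα : orderOf α = p ^ m) {g : G} (hg : g ∈ zpowers α) (hgp : g ^ p = 1) :
    ∃ s : ℤ, g = (α ^ p ^ (m - 1)) ^ s := by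
  obtain ⟨s, hs⟩ := Subgroup.mem_zpowers_iff.mp hg
  have h1 : α ^ (s * (p : ℤ)) = 1 := by rw [zpow_mul, hs, zpow_natCast, hgp]
  have h2 : ((p : ℤ) ^ m) ∣ s * p := by
    have h := orderOf_dvd_iff_zpow_eq_one.mpr h1
    rw [hα] at h
    exact_mod_cast h
  have hpne : (p : ℤ) ≠ 0 := by exact_mod_cast hp.pos.ne'
  have h3 : ((p : ℤ) ^ (m - 1)) ∣ s := by
    obtain ⟨c, hc⟩ := h2
    refine ⟨c, mul_right_cancel₀ hpne ?_⟩
    rw [hc, show (p : ℤ) ^ m = (p : ℤ) ^ (m - 1) * p by rw [← pow_succ]; congr 1; omega]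
    ring
  obtain ⟨s', rfl⟩ := h3
  refine ⟨s', ?_⟩
  rw [← hs, ← zpow_natCast α (p ^ (m - 1)), ← zpow_mul]
  congr 1

lemma inf_eq_bot_iff_noc {p : ℕ} (hp : p.Prime) {α β : G} {m n : ℕ}
    (hm : 1 ≤ m) (hn : 1 ≤ n) (hα : orderOf α = p ^ m) (hβ : orderOf β = p ^ n) :
    (zpowers α ⊓ zpowers β = ⊥) ↔ ∀ c : ℕ, α ^ p ^ (m - 1) ≠ (β ^ p ^ (n - 1)) ^ c := by
  have hαp : (α ^ p ^ (m - 1)) ^ p = 1 := by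
    rw [← pow_mul, ← pow_succ, show m - 1 + 1 = m by omega, ← hα, pow_orderOf_eq_one]
  have hβp : (β ^ p ^ (n - 1)) ^ p = 1 := by
    rw [← pow_mul, ← pow_succ, show n - 1 + 1 = n by omega, ← hβ, pow_orderOf_eq_one]
  constructor
  · intro hinf c hc
    have hmem : α ^ p ^ (m - 1) ∈ zpowers α ⊓ zpowers β := by
      rw [Subgroup.mem_inf]
      refine ⟨Subgroup.mem_zpowers_iff.mpr ⟨(p ^ (m - 1) : ℕ), by rw [zpow_natCast]⟩, ?_⟩
      rw [hc, ← pow_mul]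
      exact Subgroup.mem_zpowers_iff.mpr ⟨(p ^ (n - 1) * c : ℕ), by rw [zpow_natCast]⟩
    rw [hinf, Subgroup.mem_bot] at hmem
    have h := orderOf_dvd_of_pow_eq_one hmem
    rw [hα] at h
    have h4 := Nat.le_of_dvd (pow_pos hp.pos _) h
    have h5 : p ^ (m - 1) < p ^ m := Nat.pow_lt_pow_right hp.one_lt (by omega)
    omega
  · intro hno
    rw [Subgroup.eq_bot_iff_forall]
    intro x hx
    by_contra hx1
    rw [Subgroup.mem_inf] at hx
    obtain ⟨hxa, hxb⟩ := hx
    obtain ⟨s0, hs0⟩ := Subgroup.mem_zpowers_iff.mp hxa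
    have hxp : x ^ p ^ m = 1 := by
      rw [← hs0, ← zpow_natCast (α ^ s0), ← zpow_mul, mul_comm, zpow_mul, zpow_natCast, ← hα,
        pow_orderOf_eq_one, one_zpow]
    obtain ⟨r, hr_le, hr⟩ := (Nat.dvd_prime_pow hp).mp (orderOf_dvd_of_pow_eq_one hxp)
    have hr1 : 1 ≤ r := by
      rcases Nat.eq_zero_or_pos r with h | h
      · exfalso
        apply hx1
        apply orderOf_eq_one_iff.mp
        rw [hr, h, pow_zero]
      · exact h
    have hg1 : x ^ p ^ (r - 1) ≠ 1 := by
      intro hg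
      have h := orderOf_dvd_of_pow_eq_one hg
      rw [hr] at h
      have h4 := Nat.le_of_dvd (pow_pos hp.pos _) h
      have h5 : p ^ (r - 1) < p ^ r := Nat.pow_lt_pow_right hp.one_lt (by omega)
      omega
    have hgp : (x ^ p ^ (r - 1)) ^ p = 1 := by
      rw [← pow_mul, ← pow_succ, show r - 1 + 1 = r by omega, ← hr, pow_orderOf_eq_one]
    have hga : x ^ p ^ (r - 1) ∈ zpowers α := by
      refine Subgroup.mem_zpowers_iff.mpr ⟨s0 * (p ^ (r - 1) : ℕ), ?_⟩
      rw [zpow_mul, hs0, zpow_natCast]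
    have hgb : x ^ p ^ (r - 1) ∈ zpowers β := by
      obtain ⟨t0, ht0⟩ := Subgroup.mem_zpowers_iff.mp hxb
      refine Subgroup.mem_zpowers_iff.mpr ⟨t0 * (p ^ (r - 1) : ℕ), ?_⟩
      rw [zpow_mul, ht0, zpow_natCast]
    obtain ⟨s', hs'⟩ := exists_zpow_of_pow_p hp hm hα hga hgp
    obtain ⟨t', ht'⟩ := exists_zpow_of_pow_p hp hn hβ hgb hgp
    have hps' : ¬ (p : ℤ) ∣ s' := by
      rintro ⟨u, rfl⟩
      apply hg1
      rw [hs', zpow_mul, zpow_natCast, hαp, one_zpow]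
    have hgcd : IsCoprime (p : ℤ) s' := by
      rcases Nat.coprime_or_dvd_of_prime hp s'.natAbs with h | h
      · apply Int.isCoprime_iff_gcd_eq_one.mpr
        rw [Int.gcd]
        simpa using h
      · exfalso
        apply hps'
        have h2 : (p : ℤ) ∣ (s'.natAbs : ℤ) := by exact_mod_cast h
        exact h2.trans (Int.natAbs_dvd.mpr dvd_rfl)
    obtain ⟨u, v, huv⟩ := hgcd
    have hkey : α ^ p ^ (m - 1) = (β ^ p ^ (n - 1)) ^ (t' * v) := by
      calc α ^ p ^ (m - 1) = (α ^ p ^ (m - 1)) ^ (u * p + v * s') := by rw [huv, zpow_one]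
        _ = ((α ^ p ^ (m - 1)) ^ (p : ℤ)) ^ u * ((α ^ p ^ (m - 1)) ^ s') ^ v := by
              rw [zpow_add, mul_comm u ((p : ℕ) : ℤ), zpow_mul, mul_comm v s', zpow_mul]
        _ = (β ^ p ^ (n - 1)) ^ (t' * v) := by
              rw [zpow_natCast, hαp, one_zpow, one_mul, ← hs', ht', ← zpow_mul]
    obtain ⟨c, hc⟩ := zpow_eq_pow_of_pow_eq_one hp.pos hβp (t' * v)
    exact hno c (by rw [hkey, hc])

end generic
end Stmt6
namespace Stmt6
open Subgroup

section M1side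
variable {p d e f : ℕ}

lemma mem_rel1 : (FreeGroup.of 0 ^ p ^ e : FreeGroup (Fin 2)) ∈ M1rels p d e f := by
  simp [M1rels]

lemma mem_rel2 : (FreeGroup.of 1 ^ p ^ d : FreeGroup (Fin 2)) ∈ M1rels p d e f := by
  simp [M1rels]

lemma mem_rel3 : ((FreeGroup.of 1)⁻¹ * FreeGroup.of 0 * FreeGroup.of 1 *
    (FreeGroup.of 0 ^ (1 + p ^ f))⁻¹ : FreeGroup (Fin 2)) ∈ M1rels p d e f := by
  simp [M1rels]

lemma M1_mk_eq_one {r : FreeGroup (Fin 2)} (hr : r ∈ M1rels p d e f) :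
    (QuotientGroup.mk r : M1 p d e f) = 1 :=
  (QuotientGroup.eq_one_iff r).mpr (Subgroup.subset_normalClosure hr)

lemma M1a_pow : (M1a p d e f) ^ p ^ e = 1 := by
  have h : (M1a p d e f) ^ p ^ e = (QuotientGroup.mk (FreeGroup.of 0 ^ p ^ e) : M1 p d e f) := by
    rw [M1a, QuotientGroup.mk_pow]
    rfl
  rw [h]
  exact M1_mk_eq_one mem_rel1

lemma M1b_pow : (M1b p d e f) ^ p ^ d = 1 := by
  have h : (M1b p d e f) ^ p ^ d = (QuotientGroup.mk (FreeGroup.of 1 ^ p ^ d) : M1 p d e f) := by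
    rw [M1b, QuotientGroup.mk_pow]
    rfl
  rw [h]
  exact M1_mk_eq_one mem_rel2

lemma M1_comm : M1a p d e f * M1b p d e f = M1b p d e f * (M1a p d e f) ^ (1 + p ^ f) := by
  have h : ((M1b p d e f)⁻¹ * M1a p d e f * M1b p d e f * ((M1a p d e f) ^ (1 + p ^ f))⁻¹ : M1 p d e f)
      = 1 := by
    have h2 : ((M1b p d e f)⁻¹ * M1a p d e f * M1b p d e f * ((M1a p d e f) ^ (1 + p ^ f))⁻¹ :
        M1 p d e f) = QuotientGroup.mk ((FreeGroup.of 1)⁻¹ * FreeGroup.of 0 * FreeGroup.of 1 *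
        (FreeGroup.of 0 ^ (1 + p ^ f))⁻¹) := by
      rfl
    rw [h2]
    exact M1_mk_eq_one mem_rel3
  have h3 : (M1b p d e f)⁻¹ * M1a p d e f * M1b p d e f = (M1a p d e f) ^ (1 + p ^ f) := by
    have := mul_eq_one_iff_eq_inv.mp h
    rw [this, inv_inv]
  calc M1a p d e f * M1b p d e f
      = M1b p d e f * ((M1b p d e f)⁻¹ * M1a p d e f * M1b p d e f) := by group
    _ = M1b p d e f * (M1a p d e f) ^ (1 + p ^ f) := by rw [h3]

lemma M1_comm_pow (n : ℕ) :
    (M1a p d e f) ^ n * M1b p d e f = M1b p d e f * (M1a p d e f) ^ (n * (1 + p ^ f)) := by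
  induction n with
  | zero => simp
  | succ n ih =>
      rw [pow_succ, mul_assoc, M1_comm, ← mul_assoc, ih, mul_assoc, ← pow_add]
      congr 2
      ring

lemma M1_comm_pow2 (n m : ℕ) :
    (M1a p d e f) ^ n * (M1b p d e f) ^ m =
      (M1b p d e f) ^ m * (M1a p d e f) ^ (n * (1 + p ^ f) ^ m) := by
  induction m with
  | zero => simp
  | succ m ih =>
      rw [pow_succ, ← mul_assoc, ih, mul_assoc, M1_comm_pow, ← mul_assoc, ← pow_succ]
      congr 2
      ring

lemma M1_normal_form [H : Hyp p d e f] (g : M1 p d e f) :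
    ∃ m n : ℕ, g = (M1b p d e f) ^ m * (M1a p d e f) ^ n := by
  obtain ⟨w, rfl⟩ : ∃ w, (QuotientGroup.mk w : M1 p d e f) = g := g.exists_rep
  induction w using FreeGroup.induction_on with
  | C1 => exact ⟨0, 0, by simp; rfl⟩
  | of x =>
      fin_cases x
      · exact ⟨0, 1, by rw [pow_zero, one_mul, pow_one]; rfl⟩
      · exact ⟨1, 0, by rw [pow_zero, mul_one, pow_one]; rfl⟩
  | inv_of x _ =>
      have hpe : p ^ e - 1 + 1 = p ^ e := by
        have := Nat.one_le_pow e p H.prime.pos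
        omega
      have hpd : p ^ d - 1 + 1 = p ^ d := by
        have := Nat.one_le_pow d p H.prime.pos
        omega
      fin_cases x
      · refine ⟨0, p ^ e - 1, ?_⟩
        have h2 : M1a p d e f * (M1a p d e f) ^ (p ^ e - 1) = 1 := by
          rw [← pow_succ', hpe, M1a_pow]
        rw [pow_zero, one_mul]
        show (M1a p d e f)⁻¹ = _
        exact inv_eq_of_mul_eq_one_right h2
      · refine ⟨p ^ d - 1, 0, ?_⟩
        have h2 : M1b p d e f * (M1b p d e f) ^ (p ^ d - 1) = 1 := by
          rw [← pow_succ', hpd, M1b_pow]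
        rw [pow_zero, mul_one]
        show (M1b p d e f)⁻¹ = _
        exact inv_eq_of_mul_eq_one_right h2
  | mul x y ihx ihy =>
      obtain ⟨m1, n1, h1⟩ := ihx
      obtain ⟨m2, n2, h2⟩ := ihy
      refine ⟨m1 + m2, n1 * (1 + p ^ f) ^ m2 + n2, ?_⟩
      have hmk : (QuotientGroup.mk (x * y) : M1 p d e f) = QuotientGroup.mk x * QuotientGroup.mk y := rfl
      rw [hmk, h1, h2]
      show (M1b p d e f ^ m1 * M1a p d e f ^ n1) * (M1b p d e f ^ m2 * M1a p d e f ^ n2) = _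
      rw [mul_assoc, ← mul_assoc ((M1a p d e f) ^ n1), M1_comm_pow2, pow_add, pow_add]
      group

end M1side
end Stmt6
namespace Stmt6
open Subgroup

lemma isExact_congr {G G' : Type*} [Group G] [Group G'] (φ : G ≃* G') (m n : ℕ) (α β : G) :
    IsExactBicyclicPair m n α β ↔ IsExactBicyclicPair m n (φ α) (φ β) := by
  have ho1 : orderOf (φ α) = orderOf α := orderOf_injective φ.toMonoidHom φ.injective α
  have ho2 : orderOf (φ β) = orderOf β := orderOf_injective φ.toMonoidHom φ.injective β
  have hz : ∀ γ x : G, x ∈ zpowers γ ↔ φ x ∈ zpowers (φ γ) := by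
    intro γ x
    rw [Subgroup.mem_zpowers_iff, Subgroup.mem_zpowers_iff]
    constructor
    · rintro ⟨k, hk⟩
      exact ⟨k, by rw [← hk, map_zpow]⟩
    · rintro ⟨k, hk⟩
      exact ⟨k, φ.injective (by rw [← hk, map_zpow])⟩
  have hbot : (zpowers α ⊓ zpowers β = ⊥) ↔ (zpowers (φ α) ⊓ zpowers (φ β) = ⊥) := by
    rw [Subgroup.eq_bot_iff_forall, Subgroup.eq_bot_iff_forall]
    constructor
    · intro h x hx
      rw [Subgroup.mem_inf] at hx
      obtain ⟨y, rfl⟩ := φ.surjective x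
      have := h y (Subgroup.mem_inf.mpr ⟨(hz α y).mpr hx.1, (hz β y).mpr hx.2⟩)
      rw [this, map_one]
    · intro h x hx
      rw [Subgroup.mem_inf] at hx
      have := h (φ x) (Subgroup.mem_inf.mpr ⟨(hz α x).mp hx.1, (hz β x).mp hx.2⟩)
      exact φ.injective (by rw [this, map_one])
  have hcov : (∀ g : G, ∃ s t : ℤ, g = α ^ s * β ^ t) ↔
      (∀ g' : G', ∃ s t : ℤ, g' = φ α ^ s * φ β ^ t) := by
    constructor
    · intro h g'
      obtain ⟨s, t, hst⟩ := h (φ.symm g')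
      exact ⟨s, t, by
        rw [← map_zpow, ← map_zpow, ← map_mul, ← hst, MulEquiv.apply_symm_apply]⟩
    · intro h g
      obtain ⟨s, t, hst⟩ := h (φ g)
      exact ⟨s, t, φ.injective (by rw [hst, map_mul, map_zpow, map_zpow])⟩
  unfold IsExactBicyclicPair
  rw [ho1, ho2]
  exact and_congr Iff.rfl (and_congr Iff.rfl (and_congr hbot hcov))

section iso
variable (p d e f : ℕ) [H : Hyp p d e f]

/-- images of the generators -/
def genMap (p d e f : ℕ) : Fin 2 → Gc p d e f := ![Ac p d e f, Bc p d e f]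

include H in
lemma relations_hold : ∀ r ∈ M1rels p d e f, (FreeGroup.lift (genMap p d e f)) r = 1 := by
  haveI := nezD (p := p) (d := d) (e := e) (f := f)
  haveI := nezE (p := p) (d := d) (e := e) (f := f)
  have h1lt : 1 < p ^ d := Nat.one_lt_pow (Nat.one_le_iff_ne_zero.mp H.hd) H.prime.one_lt
  haveI : Fact (1 < p ^ d) := ⟨h1lt⟩
  intro r hr
  simp only [M1rels, Set.mem_insert_iff, Set.mem_singleton_iff] at hr
  rcases hr with rfl | rfl | rfl
  · rw [map_pow, FreeGroup.lift_apply_of]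
    show Ac p d e f ^ p ^ e = 1
    rw [Ac_pow]
    ext <;> simp
  · rw [map_pow, FreeGroup.lift_apply_of]
    show Bc p d e f ^ p ^ d = 1
    rw [Bc_pow]
    ext <;> simp
  · simp only [map_mul, map_inv, map_pow, FreeGroup.lift_apply_of]
    show (Bc p d e f)⁻¹ * Ac p d e f * Bc p d e f * (Ac p d e f ^ (1 + p ^ f))⁻¹ = 1
    have hBinv : (Bc p d e f)⁻¹ = ⟨0, -1⟩ := by
      rw [Bc, inv_def]
      ext <;> simp
    have hkey : (Bc p d e f)⁻¹ * Ac p d e f * Bc p d e f = Ac p d e f ^ (1 + p ^ f) := by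
      rw [hBinv, Ac_pow]
      show ((⟨0 * U p d e f (0 : ZMod (p ^ d)) + 1, -1 + 0⟩ : Gc p d e f) * Bc p d e f) = _
      rw [Bc]
      ext
      · show (0 * U p d e f (0 : ZMod (p ^ d)) + 1) * U p d e f (1 : ZMod (p ^ d)) + 0 = _
        rw [U_zero (p := p) (d := d) (e := e) (f := f)]
        simp only [zero_mul, zero_add, mul_one, one_mul, add_zero]
        rw [U, ZMod.val_one, pow_one, wc]
      · show (-1 + 0) + 1 = (0 : ZMod (p ^ d))
        simp
    rw [hkey, mul_inv_cancel]

/-- the canonical hom to the concrete model -/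
noncomputable def phi (p d e f : ℕ) [H : Hyp p d e f] : M1 p d e f →* Gc p d e f :=
  PresentedGroup.toGroup (relations_hold p d e f)

lemma phi_a : phi p d e f (M1a p d e f) = Ac p d e f := by
  rw [M1a, phi, PresentedGroup.toGroup.of]
  simp [genMap]

lemma phi_b : phi p d e f (M1b p d e f) = Bc p d e f := by
  rw [M1b, phi, PresentedGroup.toGroup.of]
  simp [genMap]

include H in
lemma phi_bij : Function.Bijective (phi p d e f) := by
  haveI := nezD (p := p) (d := d) (e := e) (f := f)
  haveI := nezE (p := p) (d := d) (e := e) (f := f)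
  constructor
  · rw [injective_iff_map_eq_one]
    intro g hg
    obtain ⟨m, n, rfl⟩ := M1_normal_form g
    rw [map_mul, map_pow, map_pow, phi_a, phi_b, Bc_pow, Ac_pow] at hg
    have hg2 : (⟨(n : ZMod (p ^ e)), (m : ZMod (p ^ d))⟩ : Gc p d e f) = 1 := by
      rw [← hg]
      ext
      · show _ = (0 : ZMod (p ^ e)) * U p d e f ((0 : ZMod (p ^ d))) + (n : ZMod (p ^ e))
        simp
      · show _ = (m : ZMod (p ^ d)) + 0
        simp
    rw [one_def, Gc.mk.injEq] at hg2
    obtain ⟨h1, h2⟩ := hg2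
    rw [ZMod.natCast_eq_zero_iff] at h1 h2
    obtain ⟨n', rfl⟩ := h1
    obtain ⟨m', rfl⟩ := h2
    rw [pow_mul, pow_mul, M1a_pow, M1b_pow, one_pow, one_pow, one_mul]
  · intro g
    refine ⟨(M1b p d e f) ^ (g.y.val) * (M1a p d e f) ^ (g.x.val), ?_⟩
    rw [map_mul, map_pow, map_pow, phi_a, phi_b, Bc_pow, Ac_pow]
    ext
    · show (0 : ZMod (p ^ e)) * U p d e f ((0 : ZMod (p ^ d))) + ((g.x.val : ℕ) : ZMod (p ^ e))
          = g.x
      rw [ZMod.natCast_val, ZMod.cast_id]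
      simp
    · show ((g.y.val : ℕ) : ZMod (p ^ d)) + 0 = g.y
      rw [ZMod.natCast_val, ZMod.cast_id]
      simp

/-- the isomorphism with the concrete model -/
noncomputable def phiEquiv (p d e f : ℕ) [H : Hyp p d e f] : M1 p d e f ≃* Gc p d e f :=
  MulEquiv.ofBijective _ (phi_bij p d e f)

lemma phiEquiv_ab (i j : ℤ) :
    phiEquiv p d e f (M1b p d e f ^ i * M1a p d e f ^ j) = abc p d e f i j := by
  have ha : phiEquiv p d e f (M1a p d e f) = Ac p d e f := phi_a p d e f
  have hb : phiEquiv p d e f (M1b p d e f) = Bc p d e f := phi_b p d e f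
  rw [map_mul, map_zpow, map_zpow, ha, hb, abc]

/-- equivalence with the product type (for counting) -/
def gcEquivProd (p d e f : ℕ) : Gc p d e f ≃ ZMod (p ^ e) × ZMod (p ^ d) where
  toFun g := (g.x, g.y)
  invFun z := ⟨z.1, z.2⟩
  left_inv g := rfl
  right_inv z := rfl

include H in
lemma isExact_abc_iff (i j k l : ℤ) :
    IsExactBicyclicPair (p ^ d) (p ^ e) (abc p d e f i j) (abc p d e f k l) ↔
      (orderOf (abc p d e f i j) = p ^ d ∧ orderOf (abc p d e f k l) = p ^ e ∧
        zpowers (abc p d e f i j) ⊓ zpowers (abc p d e f k l) = ⊥) := by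
  haveI := nezD (p := p) (d := d) (e := e) (f := f)
  haveI := nezE (p := p) (d := d) (e := e) (f := f)
  haveI : Fintype (Gc p d e f) := Fintype.ofEquiv _ (gcEquivProd p d e f).symm
  have hcard : Fintype.card (Gc p d e f) = p ^ d * p ^ e := by
    rw [Fintype.card_congr (gcEquivProd p d e f), Fintype.card_prod, ZMod.card, ZMod.card]
    ring
  constructor
  · rintro ⟨h1, h2, h3, _⟩
    exact ⟨h1, h2, h3⟩
  · rintro ⟨h1, h2, h3⟩
    exact ⟨h1, h2, h3, (inf_eq_bot_iff_cover h1 h2 hcard).mp h3⟩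

end iso
end Stmt6
namespace Stmt6
open Subgroup Finset

lemma dvd_shift {p X Y K : ℤ} (h : X - Y = p * K) : p ∣ X ↔ p ∣ Y := by
  constructor
  · intro h1
    have h2 : Y = X - p * K := by linarith
    rw [h2]
    exact dvd_sub h1 (Dvd.intro K rfl)
  · intro h1
    have h2 : X = Y + p * K := by linarith
    rw [h2]
    exact dvd_add h1 (Dvd.intro K rfl)

lemma int_prime {p : ℕ} (hp : p.Prime) : Prime (p : ℤ) := by
  rw [Int.prime_iff_natAbs_prime]
  simpa using hp

lemma deq_field {p : ℕ} (hp : p.Prime) {i j k l : ℤ} :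
    ((¬((p : ℤ) ∣ j ∧ (p : ℤ) ∣ i)) ∧ (¬((p : ℤ) ∣ l ∧ (p : ℤ) ∣ k)) ∧
      (∀ c : ℕ, ¬((p : ℤ) ∣ j - l * c ∧ (p : ℤ) ∣ i - k * c))) ↔
      ¬ (p : ℤ) ∣ (i * l - j * k) := by
  haveI : Fact p.Prime := ⟨hp⟩
  haveI : NeZero p := ⟨hp.pos.ne'⟩
  have hz : ∀ a : ℤ, (p : ℤ) ∣ a ↔ ((a : ℤ) : ZMod p) = 0 :=
    fun a => (ZMod.intCast_zmod_eq_zero_iff_dvd a p).symm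
  have hval : ∀ x : ZMod p, ((x.val : ℕ) : ZMod p) = x := fun x => by
    rw [ZMod.natCast_val, ZMod.cast_id]
  constructor
  · rintro ⟨h1, h2, h3⟩ hdet
    rw [hz] at hdet
    push_cast at hdet
    rw [sub_eq_zero] at hdet
    by_cases hl0 : ((l : ZMod p)) = 0
    · have hk0 : ((k : ZMod p)) ≠ 0 := by
        intro hk0
        exact h2 ⟨(hz l).mpr hl0, (hz k).mpr hk0⟩
      have hj0 : ((j : ZMod p)) = 0 := by
        have : ((j : ZMod p)) * ((k : ZMod p)) = 0 := by
          rw [← hdet, hl0, mul_zero]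
        rcases mul_eq_zero.mp this with h | h
        · exact h
        · exact absurd h hk0
      apply h3 ((i : ZMod p) * ((k : ZMod p))⁻¹).val
      constructor
      · rw [hz]
        push_cast
        rw [hval, hj0, hl0, zero_mul, sub_zero]
      · rw [hz]
        push_cast
        rw [hval, mul_comm ((k : ZMod p)) _, mul_assoc, inv_mul_cancel₀ hk0, mul_one, sub_self]
    · apply h3 ((j : ZMod p) * ((l : ZMod p))⁻¹).val
      constructor
      · rw [hz]
        push_cast
        rw [hval, mul_comm ((l : ZMod p)) _, mul_assoc, inv_mul_cancel₀ hl0, mul_one, sub_self]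
      · rw [hz]
        push_cast
        rw [hval]
        field_simp
        linear_combination hdet
  · intro hdet
    refine ⟨?_, ?_, ?_⟩
    · rintro ⟨hj, hi⟩
      exact hdet (dvd_sub (hi.mul_right l) (hj.mul_right k))
    · rintro ⟨hl, hk⟩
      exact hdet (dvd_sub (hl.mul_left i) (hk.mul_left j))
    · rintro c ⟨hc1, hc2⟩
      apply hdet
      have hq : i * l - j * k = (i - k * c) * l - (j - l * c) * k := by ring
      rw [hq]
      exact dvd_sub (hc2.mul_right l) (hc1.mul_right k)

section cases
variable {p d e f : ℕ} [H : Hyp p d e f]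
include H

lemma noc_dlt (hlt : d < e) {i j k l : ℤ} (hi : ¬ (p : ℤ) ∣ i) (c : ℕ) :
    abc p d e f i j ^ p ^ (d - 1) ≠ (abc p d e f k l ^ p ^ (e - 1)) ^ c := by
  intro hEq
  rw [← pow_mul, abc_pow, abc_pow, Gc.mk.injEq] at hEq
  obtain ⟨-, hy⟩ := hEq
  rw [ZMod.intCast_eq_intCast_iff] at hy
  have hdvd : ((p ^ d : ℕ) : ℤ) ∣ ((p ^ (e - 1) * c : ℕ) : ℤ) * k -
      ((p ^ (d - 1) : ℕ) : ℤ) * i := hy.dvd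
  have h2 : ((p ^ d : ℕ) : ℤ) ∣ ((p ^ (e - 1) * c : ℕ) : ℤ) * k := by
    push_cast
    exact Dvd.dvd.mul_right (Dvd.dvd.mul_right (pow_dvd_pow (p : ℤ) (by omega)) _) _
  have h3 : ((p ^ d : ℕ) : ℤ) ∣ ((p ^ (d - 1) : ℕ) : ℤ) * i := by
    have h4 := dvd_sub h2 hdvd
    simpa using h4
  push_cast at h3
  rw [dvd_helper2 (e := e) (f := f) (m := d - 1) (by omega) i,
    show d - (d - 1) = 1 by have := H.hd; omega, pow_one] at h3
  exact hi h3

lemma exists_c_dlt (hlt : d < e) {i j k l : ℤ} (hpi : (p : ℤ) ∣ i)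
    (hj : (p : ℤ) ^ (e - d) ∣ j) (hj1 : ¬ (p : ℤ) ^ (e - d + 1) ∣ j)
    (hl : ¬ (p : ℤ) ∣ l) :
    ∃ c : ℕ, abc p d e f i j ^ p ^ (d - 1) = (abc p d e f k l ^ p ^ (e - 1)) ^ c := by
  have hd1 := H.hd
  haveI := nez (p := p) (d := d) (e := e) (f := f)
  haveI : Fact p.Prime := ⟨H.prime⟩
  obtain ⟨zA, hzA⟩ :=
    geom_sum_p_pow H.odd (W_sub_one (p := p) (d := d) (e := e) (f := f) i) (d - 1)
  obtain ⟨j₀, hj₀⟩ := hj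
  have hlb : ((l : ZMod p)) ≠ 0 := by
    rw [Ne, ZMod.intCast_zmod_eq_zero_iff_dvd]
    exact hl
  set cz : ZMod p := ((j₀ * (1 + p * zA) : ℤ) : ZMod p) * ((l : ZMod p))⁻¹ with hcz
  refine ⟨cz.val, ?_⟩
  rw [← pow_mul, abc_pow, abc_pow]
  have hWk : (p : ℤ) ∣ Wint p d f k - 1 := W_sub_one (e := e) k
  obtain ⟨z1, hz1⟩ := geom_sum_mod_p (hWk.trans (sub_one_dvd_pow_sub_one _ _)) cz.val
  obtain ⟨z2, hz2⟩ := geom_sum_p_pow H.odd hWk (e - 1)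
  have hc : (p : ℤ) ∣ (l * (((cz.val : ℕ) : ℤ) + p * z1) * (1 + p * z2) - j₀ * (1 + p * zA)) := by
    rw [← ZMod.intCast_zmod_eq_zero_iff_dvd]
    push_cast
    rw [ZMod.natCast_val, ZMod.cast_id]
    simp only [ZMod.natCast_self, zero_mul, mul_zero, add_zero, mul_one]
    rw [hcz]
    push_cast
    simp only [ZMod.natCast_self, zero_mul, mul_zero, add_zero, mul_one]
    rw [mul_comm ((l : ZMod p)) _, mul_assoc, inv_mul_cancel₀ hlb, mul_one, sub_self]
  obtain ⟨T, hT⟩ := hc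
  ext
  · show ((j * ∑ t ∈ range (p ^ (d - 1)), Wint p d f i ^ t : ℤ) : ZMod (p ^ e)) =
      ((l * ∑ t ∈ range (p ^ (e - 1) * cz.val), Wint p d f k ^ t : ℤ) : ZMod (p ^ e))
    rw [ZMod.intCast_eq_intCast_iff, Int.modEq_iff_dvd, hzA, geom_sum_mul_range, hz1, hz2]
    push_cast
    refine ⟨T, ?_⟩
    rw [hj₀]
    rw [show (p : ℤ) ^ (e - 1) = (p : ℤ) ^ (e - d) * (p : ℤ) ^ (d - 1) by
      rw [← pow_add]; congr 1; omega]
    rw [show (p : ℤ) ^ e = (p : ℤ) ^ (e - d) * (p : ℤ) ^ (d - 1) * p by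
      rw [mul_assoc, ← pow_succ, ← pow_add]; congr 1; omega]
    linear_combination ((p : ℤ) ^ (e - d) * (p : ℤ) ^ (d - 1)) * hT
  · show (((p ^ (d - 1) : ℕ) * i : ℤ) : ZMod (p ^ d)) =
      (((p ^ (e - 1) * cz.val : ℕ) * k : ℤ) : ZMod (p ^ d))
    have hy1 : (((p ^ (d - 1) : ℕ) * i : ℤ) : ZMod (p ^ d)) = 0 := by
      rw [ZMod.intCast_zmod_eq_zero_iff_dvd]
      obtain ⟨u, rfl⟩ := hpi
      push_cast
      exact ⟨u, by rw [show (p : ℤ) ^ d = (p : ℤ) ^ (d - 1) * p by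
        rw [← pow_succ]; congr 1; omega]; ring⟩
    have hy2 : (((p ^ (e - 1) * cz.val : ℕ) * k : ℤ) : ZMod (p ^ d)) = 0 := by
      rw [ZMod.intCast_zmod_eq_zero_iff_dvd]
      push_cast
      exact Dvd.dvd.mul_right (Dvd.dvd.mul_right (pow_dvd_pow (p : ℤ) (by omega)) _) _
    rw [hy1, hy2]

lemma eqc_deq (hed : e = d) (i j k l : ℤ) (c : ℕ) :
    (abc p d e f i j ^ p ^ (d - 1) = (abc p d e f k l ^ p ^ (e - 1)) ^ c) ↔
      ((p : ℤ) ∣ j - l * c ∧ (p : ℤ) ∣ i - k * c) := by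
  subst hed
  have hd1 := H.hd
  obtain ⟨zA, hzA⟩ :=
    geom_sum_p_pow H.odd (W_sub_one (p := p) (d := e) (e := e) (f := f) i) (e - 1)
  have hWk : (p : ℤ) ∣ Wint p e f k - 1 := W_sub_one (e := e) k
  obtain ⟨z1, hz1⟩ := geom_sum_mod_p (hWk.trans (sub_one_dvd_pow_sub_one _ _)) c
  obtain ⟨z2, hz2⟩ := geom_sum_p_pow H.odd hWk (e - 1)
  rw [← pow_mul, abc_pow, abc_pow, Gc.mk.injEq, ZMod.intCast_eq_intCast_iff,
    ZMod.intCast_eq_intCast_iff, Int.modEq_iff_dvd, Int.modEq_iff_dvd, hzA,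
    geom_sum_mul_range, hz1, hz2]
  apply and_congr
  · have hID : l * (((c : ℤ) + (p : ℤ) * z1) * ((p : ℤ) ^ (e - 1) * (1 + (p : ℤ) * z2))) -
        j * ((p : ℤ) ^ (e - 1) * (1 + (p : ℤ) * zA)) =
        (p : ℤ) ^ (e - 1) * (l * ((c : ℤ) + (p : ℤ) * z1) * (1 + (p : ℤ) * z2) -
          j * (1 + (p : ℤ) * zA)) := by ring
    rw [show ((p ^ e : ℕ) : ℤ) = (p : ℤ) ^ e from by push_cast; rfl, hID,
      dvd_helper2 (e := e) (f := f) (m := e - 1) (by omega) _,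
      show e - (e - 1) = 1 by omega, pow_one]
    exact (dvd_shift (Y := l * (c : ℤ) - j)
        (K := l * (c : ℤ) * z2 + l * z1 * (1 + (p : ℤ) * z2) - j * zA) (by ring)).trans
      (by rw [show l * (c : ℤ) - j = -(j - l * c) from by ring, dvd_neg])
  · have hID2 : ((p ^ (e - 1) * c : ℕ) : ℤ) * k - ((p ^ (e - 1) : ℕ) : ℤ) * i =
        (p : ℤ) ^ (e - 1) * ((c : ℤ) * k - i) := by push_cast; ring
    rw [show ((p ^ e : ℕ) : ℤ) = (p : ℤ) ^ e from by push_cast; rfl, hID2,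
      dvd_helper2 (e := e) (f := f) (m := e - 1) (by omega) _,
      show e - (e - 1) = 1 by omega, pow_one,
      show (c : ℤ) * k - i = -(i - k * c) from by ring, dvd_neg]

lemma case_dlt (hlt : d < e) (i j k l : ℤ) :
    IsExactBicyclicPair (p ^ d) (p ^ e) (abc p d e f i j) (abc p d e f k l) ↔
      ((p : ℤ) ^ (e - d) ∣ j ∧ ¬ (p : ℤ) ∣ i * l) := by
  have hpInt : Prime (p : ℤ) := int_prime H.prime
  rw [isExact_abc_iff]
  constructor
  · rintro ⟨ho1, ho2, hinf⟩
    obtain ⟨hj, hj2⟩ := (orderOf_abc i j).mp ho1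
    have hl : ¬ (p : ℤ) ∣ l := (orderOf_abc' k l hlt).mp ho2
    refine ⟨hj, ?_⟩
    intro hil
    rcases hpInt.dvd_mul.mp hil with hi | hl'
    · have hj1 : ¬ (p : ℤ) ^ (e - d + 1) ∣ j := fun hh => hj2 ⟨hh, hi⟩
      obtain ⟨c, hc⟩ := exists_c_dlt (p := p) (d := d) (e := e) (f := f) hlt hi hj hj1 hl
      have hnoc := (inf_eq_bot_iff_noc H.prime H.hd (by omega : 1 ≤ e) ho1 ho2).mp hinf
      exact hnoc c hc
    · exact hl hl'
  · rintro ⟨hj, hil⟩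
    have hi : ¬ (p : ℤ) ∣ i := fun h => hil (h.mul_right l)
    have hl : ¬ (p : ℤ) ∣ l := fun h => hil (h.mul_left i)
    have ho1 : orderOf (abc p d e f i j) = p ^ d :=
      (orderOf_abc i j).mpr ⟨hj, fun h => hi h.2⟩
    have ho2 : orderOf (abc p d e f k l) = p ^ e := (orderOf_abc' k l hlt).mpr hl
    refine ⟨ho1, ho2, ?_⟩
    rw [inf_eq_bot_iff_noc H.prime H.hd (by omega : 1 ≤ e) ho1 ho2]
    intro c
    exact noc_dlt hlt hi c

lemma case_deq (hed : e = d) (i j k l : ℤ) :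
    IsExactBicyclicPair (p ^ d) (p ^ e) (abc p d e f i j) (abc p d e f k l) ↔
      ¬ (p : ℤ) ∣ (i * l - j * k) := by
  subst hed
  have hd1 := H.hd
  have hords : ∀ i0 j0 : ℤ, (orderOf (abc p e e f i0 j0) = p ^ e ↔
      ¬((p : ℤ) ∣ j0 ∧ (p : ℤ) ∣ i0)) := by
    intro i0 j0
    rw [orderOf_abc, Nat.sub_self, pow_zero, zero_add, pow_one]
    simp
  rw [isExact_abc_iff]
  constructor
  · rintro ⟨ho1, ho2, hinf⟩
    have hnoc := (inf_eq_bot_iff_noc H.prime hd1 hd1 ho1 ho2).mp hinf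
    apply (deq_field H.prime).mp
    refine ⟨(hords i j).mp ho1, (hords k l).mp ho2, ?_⟩
    intro c hc
    exact hnoc c ((eqc_deq rfl i j k l c).mpr hc)
  · intro hdet
    obtain ⟨hA, hB, hC⟩ := (deq_field H.prime).mpr hdet
    have ho1 : orderOf (abc p e e f i j) = p ^ e := (hords i j).mpr hA
    have ho2 : orderOf (abc p e e f k l) = p ^ e := (hords k l).mpr hB
    refine ⟨ho1, ho2, ?_⟩
    rw [inf_eq_bot_iff_noc H.prime hd1 hd1 ho1 ho2]
    intro c hc
    exact hC c ((eqc_deq rfl i j k l c).mp hc)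

end cases
end Stmt6

/-- For `G = M₁(p,d,e,f)` with canonical generators `a, b`, and integers
`i, j, k, l`, set `α = bⁱaʲ`, `β = bᵏaˡ`. If `d = e`, then `(α, β)` is an exact
`(p^d,p^e)`-bicyclic pair iff `il - jk ≢ 0 (mod p)`; if `d < e`, then `(α, β)` is an exact
`(p^d,p^e)`-bicyclic pair iff `p^(e-d) ∣ j` and `p ∤ il`. -/
theorem stmt_6 (p d e f : ℕ) (hp : p.Prime) (hodd : Odd p)
    (hcond : (1 ≤ d ∧ d ≤ f ∧ f ≤ e ∧ e ≤ d + f) ∨ (1 ≤ f ∧ f < d ∧ d < e ∧ e ≤ d + f))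
    (i j k l : ℤ) :
    (d = e →
      (IsExactBicyclicPair (p ^ d) (p ^ e)
          (M1b p d e f ^ i * M1a p d e f ^ j) (M1b p d e f ^ k * M1a p d e f ^ l) ↔
        ¬ (p : ℤ) ∣ (i * l - j * k))) ∧
    (d < e →
      (IsExactBicyclicPair (p ^ d) (p ^ e)
          (M1b p d e f ^ i * M1a p d e f ^ j) (M1b p d e f ^ k * M1a p d e f ^ l) ↔
        ((p : ℤ) ^ (e - d) ∣ j ∧ ¬ (p : ℤ) ∣ i * l))) := by
  haveI hH : Stmt6.Hyp p d e f := by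
    rcases hcond with ⟨h1, h2, h3, h4⟩ | ⟨h1, h2, h3, h4⟩ <;>
      exact ⟨hp, hodd, by omega, by omega, by omega, by omega⟩
  constructor
  · intro hde
    rw [Stmt6.isExact_congr (Stmt6.phiEquiv p d e f), Stmt6.phiEquiv_ab, Stmt6.phiEquiv_ab]
    exact Stmt6.case_deq hde.symm i j k l
  · intro hlt
    rw [Stmt6.isExact_congr (Stmt6.phiEquiv p d e f), Stmt6.phiEquiv_ab, Stmt6.phiEquiv_ab]
    exact Stmt6.case_dlt hlt i j k l
end

section
/- Let p be an odd prime, let d, e, f be positive integers with 1 ≤ f < d < e, and let G = M₂(p,d,e,f) with canonical generators a, b. For integers i, j, k, l, set α = bⁱaʲ and β = bᵏaˡ. Then (α, β) is an exact (p^d, p^e)-bicyclic pair of G if and only if p^{e−d} ∣ i and p ∤ jk. -/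
open Finset

open Finset

/-- Geometric sum over `range (a*b)` factors. -/
lemma geomS_mul (q : ℤ) (a b : ℕ) :
    ∑ t ∈ range (a * b), q ^ t
      = (∑ t ∈ range a, q ^ t) * ∑ s ∈ range b, (q ^ a) ^ s := by
  induction b with
  | zero => simp
  | succ n ih =>
    rw [Nat.mul_succ, Finset.sum_range_add, ih, Finset.sum_range_succ]
    simp only [pow_add, ← Finset.mul_sum, ← pow_mul]
    ring

lemma dvd_geomS (q : ℤ) (a n : ℕ) (h : a ∣ n) :
    (∑ t ∈ range a, q ^ t) ∣ ∑ t ∈ range n, q ^ t := by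
  obtain ⟨b, rfl⟩ := h
  rw [geomS_mul]; exact Dvd.intro _ rfl

lemma p_dvd_pow_sub_one {p : ℤ} {q : ℤ} (h : p ∣ q - 1) (n : ℕ) : p ∣ q ^ n - 1 := by
  have := geom_sum_mul q n
  calc p ∣ (∑ i ∈ range n, q ^ i) * (q - 1) := Dvd.dvd.mul_left h _
  _ = q ^ n - 1 := geom_sum_mul q n

lemma geomS_congr {p q : ℤ} (h : p ∣ q - 1) (n : ℕ) :
    p ∣ (∑ t ∈ range n, q ^ t) - n := by
  have : (∑ t ∈ range n, q ^ t) - n = ∑ t ∈ range n, (q ^ t - 1) := by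
    rw [Finset.sum_sub_distrib]; simp
  rw [this]
  exact Finset.dvd_sum fun t _ => p_dvd_pow_sub_one h t

lemma spq (p : ℕ) (hp : p.Prime) (hodd : Odd p) {x : ℤ} (h : (p : ℤ) ∣ x - 1) :
    (p : ℤ) ^ 2 ∣ (∑ t ∈ range p, x ^ t) - p := by
  have key : ∀ t : ℕ, ((p : ℤ))^2 ∣ (x ^ t - 1) - (x - 1) * t := by
    intro t
    have h1 : x ^ t - 1 = (x - 1) * ∑ u ∈ range t, x ^ u := by
      rw [mul_comm, geom_sum_mul]
    have h2 : (p:ℤ) ∣ (∑ u ∈ range t, x ^ u) - t := geomS_congr h t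
    have : (x ^ t - 1) - (x - 1) * t = (x - 1) * ((∑ u ∈ range t, x ^ u) - t) := by
      rw [h1]; ring
    rw [this, sq]
    exact mul_dvd_mul h h2
  have hsum : (p:ℤ)^2 ∣ ((∑ t ∈ range p, x ^ t) - p) - (x - 1) * ∑ t ∈ range p, (t : ℤ) := by
    have e1 : ((∑ t ∈ range p, x ^ t) - p) - (x - 1) * ∑ t ∈ range p, (t : ℤ)
        = ∑ t ∈ range p, ((x ^ t - 1) - (x - 1) * t) := by
      rw [Finset.sum_sub_distrib, Finset.sum_sub_distrib, Finset.mul_sum]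
      simp [Finset.sum_sub_distrib]
    rw [e1]
    exact Finset.dvd_sum fun t _ => key t
  have hgauss : (p:ℤ) ∣ ∑ t ∈ range p, (t : ℤ) := by
    have h2 : (∑ t ∈ range p, (t:ℤ)) * 2 = p * (p - 1) := by
      have := Finset.sum_range_id_mul_two p
      have := congrArg (Nat.cast : ℕ → ℤ) this
      push_cast at this
      rw [Nat.cast_sub hp.one_le] at this
      push_cast at this
      linarith [this]
    have hdvd : (p:ℤ) ∣ (∑ t ∈ range p, (t:ℤ)) * 2 := h2 ▸ Dvd.intro _ rfl
    rcases (Int.Prime.dvd_mul' (by exact_mod_cast hp) hdvd) with h' | h'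
    · exact h'
    · exfalso
      have h2' : (p:ℤ) ≤ 2 := Int.le_of_dvd (by norm_num) h'
      have hpz : p ≤ 2 := by exact_mod_cast h2'
      have : p = 2 := le_antisymm hpz hp.two_le
      subst this; exact (Nat.not_odd_iff_even.mpr (by norm_num)) hodd
  have : (p:ℤ)^2 ∣ (x - 1) * ∑ t ∈ range p, (t : ℤ) := by
    rw [sq]; exact mul_dvd_mul h hgauss
  have := dvd_add hsum this
  simpa using this

lemma spm (p : ℕ) (hp : p.Prime) (hodd : Odd p) {q : ℤ} (h : (p : ℤ) ∣ q - 1) :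
    ∀ m : ℕ, (p : ℤ) ^ (m + 1) ∣ (∑ t ∈ range (p ^ m), q ^ t) - p ^ m := by
  intro m
  induction m with
  | zero => simp
  | succ m ih =>
    obtain ⟨A, hA⟩ := ih
    have hQ : (p:ℤ) ∣ q ^ (p ^ m) - 1 := p_dvd_pow_sub_one h _
    obtain ⟨B, hB⟩ := spq p hp hodd hQ
    have hfac : ∑ t ∈ range (p ^ (m+1)), q ^ t
        = (∑ t ∈ range (p ^ m), q ^ t) * ∑ s ∈ range p, (q ^ (p ^ m)) ^ s := by
      rw [← geomS_mul, pow_succ]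
    have e1 : (∑ t ∈ range (p ^ m), q ^ t) = (p:ℤ) ^ m + (p:ℤ)^(m+1) * A := by linarith [hA]
    have e2 : (∑ s ∈ range p, (q ^ (p ^ m)) ^ s) = (p:ℤ) + (p:ℤ)^2 * B := by linarith [hB]
    refine ⟨B + A + (p:ℤ) * A * B, ?_⟩
    rw [hfac, e1, e2]
    push_cast
    ring

namespace B7

def Good (p d e f : ℕ) : Prop := p.Prime ∧ Odd p ∧ 0 < f ∧ f < d ∧ d < e

@[ext]
structure Mdl (p d e f : ℕ) where
  x : ZMod (p ^ d)
  y : ZMod (p ^ e)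

variable {p d e f : ℕ}

/-- the multiplier `r = 1 + p^f` in `ZMod (p^d)`. -/
def rr (p d f : ℕ) : ZMod (p ^ d) := (1 + p ^ f : ℕ)

/-- the action exponent map. -/
def chi (p d e f : ℕ) (y : ZMod (p ^ e)) : ZMod (p ^ d) := rr p d f ^ y.val

namespace Good
variable (hG : Good p d e f)
include hG

lemma hP : p.Prime := hG.1
lemma hO : Odd p := hG.2.1
lemma hf0 : 0 < f := hG.2.2.1
lemma hfd : f < d := hG.2.2.2.1
lemma hde : d < e := hG.2.2.2.2
lemma nzd : NeZero (p ^ d) := ⟨pow_ne_zero _ hG.hP.pos.ne'⟩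
lemma nze : NeZero (p ^ e) := ⟨pow_ne_zero _ hG.hP.pos.ne'⟩
lemma hpd1 : 1 < p ^ d := Nat.one_lt_pow (by have := hG.hfd; omega) hG.hP.two_le
lemma hpe1 : 1 < p ^ e := Nat.one_lt_pow (by have := hG.hde; omega) hG.hP.two_le

end Good


/-- `r^(p^e) = 1` in `ZMod (p^d)`. -/
lemma rr_pow_pe (hG : Good p d e f) : rr p d f ^ p ^ e = 1 := by
  have hq1 : (p : ℤ) ∣ (1 + (p:ℤ) ^ f) - 1 := by
    simp only [add_sub_cancel_left]
    exact dvd_pow_self _ hG.hf0.ne'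
  have hS := spm p hG.hP hG.hO hq1 e
  have hS' : (p:ℤ) ^ e ∣ ∑ t ∈ range (p ^ e), (1 + (p:ℤ) ^ f) ^ t := by
    have : (p:ℤ)^e ∣ (∑ t ∈ range (p ^ e), (1 + (p:ℤ) ^ f) ^ t) - (p:ℤ)^e :=
      dvd_trans (pow_dvd_pow _ (by omega)) hS
    simpa using dvd_add this (dvd_refl ((p:ℤ)^e))
  have hdvd : (p:ℤ) ^ d ∣ (1 + (p:ℤ) ^ f) ^ p ^ e - 1 := by
    have hfac : (1 + (p:ℤ) ^ f) ^ p ^ e - 1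
        = (∑ t ∈ range (p ^ e), (1 + (p:ℤ) ^ f) ^ t) * ((1 + (p:ℤ)^f) - 1) :=
      (geom_sum_mul _ _).symm
    rw [hfac]
    have h1 : (p:ℤ)^d ∣ (p:ℤ)^e * (p:ℤ)^f := by
      rw [← pow_add]; exact pow_dvd_pow _ (by have := hG.hde; omega)
    calc (p:ℤ)^d ∣ (p:ℤ)^e * (p:ℤ)^f := h1
      _ ∣ (∑ t ∈ range (p ^ e), (1 + (p:ℤ) ^ f) ^ t) * ((1 + (p:ℤ)^f) - 1) := by
          apply mul_dvd_mul hS'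
          simp
  have : ((p:ℕ) : ℤ) ^ d ∣ ((1 + p ^ f : ℕ) : ℤ) ^ p ^ e - 1 := by push_cast; push_cast at hdvd; exact hdvd
  have hz : (((1 + p ^ f : ℕ) ^ p ^ e - 1 : ℤ) : ZMod (p ^ d)) = 0 := by
    rw [ZMod.intCast_zmod_eq_zero_iff_dvd]
    exact_mod_cast this
  have : ((1 + p ^ f : ℕ) : ZMod (p^d)) ^ p ^ e - 1 = 0 := by push_cast at hz ⊢; exact hz
  rw [rr]
  linear_combination this

lemma rr_pow_mod (hG : Good p d e f) (m : ℕ) : rr p d f ^ (m % p ^ e) = rr p d f ^ m := by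
  conv_rhs => rw [← Nat.div_add_mod m (p ^ e)]
  rw [pow_add, pow_mul, rr_pow_pe hG, one_pow, one_mul]

lemma chi_add (hG : Good p d e f) (y z : ZMod (p ^ e)) :
    chi p d e f (y + z) = chi p d e f y * chi p d e f z := by
  haveI := hG.nze
  rw [chi, chi, chi, ZMod.val_add, rr_pow_mod hG, pow_add]

lemma chi_zero (hG : Good p d e f) : chi p d e f 0 = 1 := by
  haveI := hG.nze
  rw [chi, ZMod.val_zero, pow_zero]

instance : One (Mdl p d e f) := ⟨⟨0, 0⟩⟩
instance : Mul (Mdl p d e f) := ⟨fun g h => ⟨chi p d e f h.y * g.x + h.x, g.y + h.y⟩⟩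
instance : Inv (Mdl p d e f) := ⟨fun g => ⟨-(chi p d e f (-g.y) * g.x), -g.y⟩⟩

lemma mul_def (g h : Mdl p d e f) :
    g * h = ⟨chi p d e f h.y * g.x + h.x, g.y + h.y⟩ := rfl
lemma one_def : (1 : Mdl p d e f) = ⟨0, 0⟩ := rfl
lemma inv_def (g : Mdl p d e f) : g⁻¹ = ⟨-(chi p d e f (-g.y) * g.x), -g.y⟩ := rfl

instance [hF : Fact (Good p d e f)] : Group (Mdl p d e f) where
  mul_assoc g h k := by
    have hG := hF.out
    ext <;> simp [mul_def, chi_add hG] <;> ring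
  one_mul g := by
    have hG := hF.out
    ext <;> simp [mul_def, one_def]
  mul_one g := by
    have hG := hF.out
    ext <;> simp [mul_def, one_def, chi_zero hG]
  inv_mul_cancel g := by
    have hG := hF.out
    have h1 : chi p d e f g.y * chi p d e f (-g.y) = 1 := by
      rw [← chi_add hG, add_neg_cancel, chi_zero hG]
    ext <;> simp [mul_def, one_def, inv_def]
    linear_combination (-g.x : ZMod (p^d)) * h1

section Powers
variable [hF : Fact (Good p d e f)]

lemma pow_def (g : Mdl p d e f) (n : ℕ) :
    g ^ n = ⟨g.x * ∑ t ∈ range n, chi p d e f g.y ^ t, n • g.y⟩ := by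
  induction n with
  | zero => simp [one_def]
  | succ n ih =>
    rw [pow_succ, ih, mul_def, geom_sum_succ]
    ext
    · simp; ring
    · simp [add_nsmul, nsmul_eq_mul]; ring

/-- generator `a` of the model. -/
def AA : Mdl p d e f := ⟨1, 0⟩
/-- generator `b` of the model. -/
def BB : Mdl p d e f := ⟨0, 1⟩

lemma AA_pow (n : ℕ) : (AA : Mdl p d e f) ^ n = ⟨(n : ZMod (p ^ d)), 0⟩ := by
  rw [pow_def]
  ext
  · simp [AA, chi_zero hF.out]
  · simp [AA]

lemma BB_pow (n : ℕ) : (BB : Mdl p d e f) ^ n = ⟨0, (n : ZMod (p ^ e))⟩ := by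
  rw [pow_def]
  ext
  · simp [BB]
  · simp [BB]

lemma AA_zpow (n : ℤ) : (AA : Mdl p d e f) ^ n = ⟨(n : ZMod (p ^ d)), 0⟩ := by
  obtain ⟨m, rfl | rfl⟩ := Int.eq_nat_or_neg n
  · rw [zpow_natCast, AA_pow]; push_cast; rfl
  · rw [zpow_neg, zpow_natCast, AA_pow, inv_def]
    ext
    · simp [chi_zero hF.out]
    · simp
lemma BB_zpow (n : ℤ) : (BB : Mdl p d e f) ^ n = ⟨0, (n : ZMod (p ^ e))⟩ := by
  obtain ⟨m, rfl | rfl⟩ := Int.eq_nat_or_neg n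
  · rw [zpow_natCast, BB_pow]; push_cast; rfl
  · rw [zpow_neg, zpow_natCast, BB_pow, inv_def]
    ext
    · simp
    · simp

lemma BA_zpow (i j : ℤ) :
    (BB : Mdl p d e f) ^ i * AA ^ j = ⟨(j : ZMod (p ^ d)), (i : ZMod (p ^ e))⟩ := by
  rw [AA_zpow, BB_zpow, mul_def]
  ext
  · simp [chi_zero hF.out]
  · simp

end Powers

/-- the canonical element `b^i a^j` of the model, as components. -/
def elt (p d e f : ℕ) (i j : ℤ) : Mdl p d e f := ⟨(j : ZMod (p ^ d)), (i : ZMod (p ^ e))⟩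

/-- the integer lift of `chi` at `i`. -/
def qq (p e f : ℕ) (i : ℤ) : ℤ := (1 + (p : ℤ) ^ f) ^ ((i : ZMod (p ^ e)).val)

lemma qq_sub_one (hG : Good p d e f) (i : ℤ) : (p : ℤ) ∣ qq p e f i - 1 := by
  apply p_dvd_pow_sub_one
  simp only [add_sub_cancel_left]
  exact dvd_pow_self _ hG.hf0.ne'

section Powers2
variable [hF : Fact (Good p d e f)]

lemma chi_int (i : ℤ) :
    chi p d e f (i : ZMod (p ^ e)) = ((qq p e f i : ℤ) : ZMod (p ^ d)) := by
  rw [chi, rr, qq]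
  push_cast
  ring

lemma elt_pow (i j : ℤ) (n : ℕ) :
    (elt p d e f i j) ^ n
      = ⟨((j * ∑ t ∈ range n, (qq p e f i) ^ t : ℤ) : ZMod (p ^ d)),
          (((n : ℤ) * i : ℤ) : ZMod (p ^ e))⟩ := by
  rw [elt, pow_def]
  ext
  · simp only [chi_int]
    push_cast
    ring
  · simp only [nsmul_eq_mul]
    push_cast
    ring

lemma cast_zero_iff_d (z : ℤ) : ((z : ZMod (p ^ d)) = 0) ↔ (p : ℤ) ^ d ∣ z := by
  rw [ZMod.intCast_zmod_eq_zero_iff_dvd]; push_cast; rfl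

lemma cast_zero_iff_e (z : ℤ) : ((z : ZMod (p ^ e)) = 0) ↔ (p : ℤ) ^ e ∣ z := by
  rw [ZMod.intCast_zmod_eq_zero_iff_dvd]; push_cast; rfl

/-- `p^min(d,n)` divides the geometric sum over `range (p^n)`. -/
lemma S_dvd (hG : Good p d e f) (i : ℤ) {n : ℕ} (hn : d ≤ n) :
    ((∑ t ∈ range (p ^ n), (qq p e f i) ^ t : ℤ) : ZMod (p ^ d)) = 0 := by
  rw [cast_zero_iff_d]
  have hS := spm p hG.hP hG.hO (qq_sub_one hG i) n
  have h1 : (p:ℤ) ^ n ∣ ∑ t ∈ range (p ^ n), (qq p e f i) ^ t := by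
    have h2 : (p:ℤ)^n ∣ (∑ t ∈ range (p ^ n), (qq p e f i) ^ t) - (p:ℤ)^n :=
      dvd_trans (pow_dvd_pow _ (by omega)) hS
    simpa using dvd_add h2 (dvd_refl ((p:ℤ)^n))
  exact dvd_trans (pow_dvd_pow _ hn) h1

lemma S_exact (hG : Good p d e f) (i : ℤ) (n : ℕ) :
    ∃ w : ℤ, (∑ t ∈ range (p ^ n), (qq p e f i) ^ t) = (p:ℤ) ^ n * w ∧ ¬ (p:ℤ) ∣ w := by
  obtain ⟨A, hA⟩ := spm p hG.hP hG.hO (qq_sub_one hG i) n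
  refine ⟨1 + p * A, by rw [pow_succ] at hA; linarith [hA], ?_⟩
  intro hdvd
  have : (p:ℤ) ∣ 1 := (dvd_add_right ⟨A, rfl⟩).mp (by rwa [add_comm] at hdvd)
  have := Int.le_of_dvd one_pos this
  have := hG.hP.two_le
  omega

lemma elt_pow_pd_eq_one (hG : Good p d e f) (i j : ℤ) :
    (elt p d e f i j) ^ (p ^ d) = 1 ↔ (p : ℤ) ^ (e - d) ∣ i := by
  rw [elt_pow, one_def, Mdl.ext_iff]
  have hx : ((j * ∑ t ∈ range (p ^ d), (qq p e f i) ^ t : ℤ) : ZMod (p ^ d)) = 0 := by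
    rw [Int.cast_mul, S_dvd hG i (le_refl d), mul_zero]
  simp only [hx, true_and]
  rw [cast_zero_iff_e]
  have he : (p:ℤ) ^ e = (p:ℤ) ^ d * (p:ℤ) ^ (e - d) := by
    rw [← pow_add]; congr 1; have := hG.hde; omega
  rw [he]
  push_cast
  rw [mul_dvd_mul_iff_left (a := (p:ℤ)^d) (pow_ne_zero _ (by exact_mod_cast hG.hP.pos.ne'))]

lemma orderOf_elt_alpha (hG : Good p d e f) {i j : ℤ}
    (hi : (p : ℤ) ^ (e - d) ∣ i) (hj : ¬ (p : ℤ) ∣ j) :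
    orderOf (elt p d e f i j) = p ^ d := by
  haveI : Fact p.Prime := ⟨hG.hP⟩
  have hd1 : d - 1 + 1 = d := by have := hG.hfd; omega
  have hfin : (elt p d e f i j) ^ p ^ (d - 1 + 1) = 1 := by
    rw [hd1]; exact (elt_pow_pd_eq_one hG i j).mpr hi
  have hnot : ¬ (elt p d e f i j) ^ p ^ (d - 1) = 1 := by
    intro hone
    rw [elt_pow, one_def, Mdl.ext_iff] at hone
    have hx := hone.1
    rw [cast_zero_iff_d] at hx
    obtain ⟨w, hw, hpw⟩ := S_exact hG i (d - 1)
    rw [hw] at hx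
    have hd : (p:ℤ) ^ d = (p:ℤ) ^ (d-1) * p := by rw [← pow_succ, hd1]
    rw [hd] at hx
    have hx' : (p:ℤ)^(d-1) * ((p:ℤ) * 1) ∣ (p:ℤ)^(d-1) * (j * w) := by
      calc (p:ℤ)^(d-1) * ((p:ℤ)*1) = (p:ℤ)^(d-1) * p := by ring
      _ ∣ j * ((p:ℤ)^(d-1) * w) := hx
      _ = (p:ℤ)^(d-1) * (j * w) := by ring
    have hpjw : (p:ℤ) ∣ j * w := by
      have := (mul_dvd_mul_iff_left
        (a := (p:ℤ)^(d-1)) (pow_ne_zero _ (by exact_mod_cast hG.hP.pos.ne'))).mp hx'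
      simpa using this
    have hip : Prime (p:ℤ) := Nat.prime_iff_prime_int.mp hG.hP
    rcases hip.dvd_mul.mp hpjw with h | h
    · exact hj h
    · exact hpw h
  have := orderOf_eq_prime_pow hnot hfin
  rwa [hd1] at this

lemma orderOf_elt_beta (hG : Good p d e f) (k l : ℤ) :
    orderOf (elt p d e f k l) = p ^ e ↔ ¬ (p : ℤ) ∣ k := by
  haveI : Fact p.Prime := ⟨hG.hP⟩
  have he1 : e - 1 + 1 = e := by have := hG.hde; omega
  have hde' : d ≤ e - 1 := by have := hG.hde; omega
  constructor
  · intro hord hpk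
    -- then beta^(p^(e-1)) = 1, contradiction with order p^e
    have h1 : (elt p d e f k l) ^ p ^ (e - 1) = 1 := by
      rw [elt_pow, one_def, Mdl.ext_iff]
      constructor
      · rw [Int.cast_mul, S_dvd hG k hde', mul_zero]
      · rw [cast_zero_iff_e]
        obtain ⟨k', rfl⟩ := hpk
        have : (p:ℤ)^e = (p:ℤ)^(e-1) * p := by rw [← pow_succ, he1]
        rw [this]
        push_cast
        exact mul_dvd_mul_left _ (Dvd.intro _ rfl)
    have := orderOf_dvd_of_pow_eq_one h1
    rw [hord] at this
    have := Nat.le_of_dvd (pow_pos hG.hP.pos _) this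
    have := Nat.pow_lt_pow_right hG.hP.one_lt (by omega : e - 1 < e)
    omega
  · intro hpk
    have hfin : (elt p d e f k l) ^ p ^ (e - 1 + 1) = 1 := by
      rw [he1, elt_pow, one_def, Mdl.ext_iff]
      constructor
      · rw [Int.cast_mul, S_dvd hG k (le_of_lt hG.hde), mul_zero]
      · rw [cast_zero_iff_e]
        push_cast
        exact Dvd.intro _ rfl
    have hnot : ¬ (elt p d e f k l) ^ p ^ (e - 1) = 1 := by
      intro hone
      rw [elt_pow, one_def, Mdl.ext_iff] at hone
      have hy := hone.2
      rw [cast_zero_iff_e] at hy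
      have : (p:ℤ)^e = (p:ℤ)^(e-1) * p := by rw [← pow_succ, he1]
      rw [this] at hy
      push_cast at hy
      have := (mul_dvd_mul_iff_left
        (a := (p:ℤ)^(e-1)) (pow_ne_zero _ (by exact_mod_cast hG.hP.pos.ne'))).mp hy
      exact hpk this
    have := orderOf_eq_prime_pow hnot hfin
    rwa [he1] at this

end Powers2

-- integer version of S_dvd
lemma S_dvd_int (hG : Good p d e f) (i : ℤ) {n : ℕ} (hn : d ≤ n) :
    (p : ℤ) ^ d ∣ ∑ t ∈ range (p ^ n), (qq p e f i) ^ t := by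
  have hS := spm p hG.hP hG.hO (qq_sub_one hG i) n
  have h1 : (p:ℤ) ^ n ∣ ∑ t ∈ range (p ^ n), (qq p e f i) ^ t := by
    have h2 : (p:ℤ)^n ∣ (∑ t ∈ range (p ^ n), (qq p e f i) ^ t) - (p:ℤ)^n :=
      dvd_trans (pow_dvd_pow _ (by omega)) hS
    simpa using dvd_add h2 (dvd_refl ((p:ℤ)^n))
  exact dvd_trans (pow_dvd_pow _ hn) h1

section Torsion
variable [hF : Fact (Good p d e f)]

lemma chi_mul_tor (hG : Good p d e f) (y : ZMod (p ^ e)) {x : ZMod (p ^ d)}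
    (hx : (p : ZMod (p ^ d)) * x = 0) : chi p d e f y * x = x := by
  rw [chi]
  induction (y.val) with
  | zero => rw [pow_zero, one_mul]
  | succ m ih =>
    have hrr : rr p d f * x = x := by
      have : rr p d f = 1 + ((p : ZMod (p^d))) ^ f := by rw [rr]; push_cast; ring
      have hf : ((p : ZMod (p^d))) ^ f * x = 0 := by
        have hf1 : f - 1 + 1 = f := by have := hG.hf0; omega
        have hps : ((p : ZMod (p^d))) ^ f = ((p : ZMod (p^d)))^(f-1) * (p : ZMod (p^d)) := by
          rw [← pow_succ, hf1]
        rw [hps, mul_assoc, hx, mul_zero]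
      rw [this]
      linear_combination hf
    rw [pow_succ, mul_assoc, hrr, ih]

lemma tor_pow (hG : Good p d e f) (g : Mdl p d e f)
    (hx : (p : ZMod (p ^ d)) * g.x = 0) (hy : (p : ZMod (p ^ e)) * g.y = 0) (n : ℕ) :
    g ^ n = ⟨(n : ZMod (p ^ d)) * g.x, (n : ZMod (p ^ e)) * g.y⟩ := by
  induction n with
  | zero => simp [one_def]
  | succ n ih =>
    rw [pow_succ, ih, mul_def]
    ext
    · show chi p d e f g.y * ((n : ZMod (p ^ d)) * g.x) + g.x = _
      have : (p : ZMod (p ^ d)) * ((n : ZMod (p ^ d)) * g.x) = 0 := by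
        rw [mul_left_comm, hx, mul_zero]
      rw [chi_mul_tor hG _ this]
      push_cast
      ring
    · show (n : ZMod (p ^ e)) * g.y + g.y = _
      push_cast
      ring

lemma tor_zpow (hG : Good p d e f) (g : Mdl p d e f)
    (hx : (p : ZMod (p ^ d)) * g.x = 0) (hy : (p : ZMod (p ^ e)) * g.y = 0) (s : ℤ) :
    g ^ s = ⟨(s : ZMod (p ^ d)) * g.x, (s : ZMod (p ^ e)) * g.y⟩ := by
  obtain ⟨m, rfl | rfl⟩ := Int.eq_nat_or_neg s
  · rw [zpow_natCast, tor_pow hG g hx hy]; push_cast; rfl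
  · rw [zpow_neg, zpow_natCast, tor_pow hG g hx hy, inv_def]
    ext
    · show -(chi p d e f _ * ((m : ZMod (p ^ d)) * g.x)) = _
      have : (p : ZMod (p ^ d)) * ((m : ZMod (p ^ d)) * g.x) = 0 := by
        rw [mul_left_comm, hx, mul_zero]
      rw [chi_mul_tor hG _ this]
      push_cast
      ring
    · show -((m : ZMod (p ^ e)) * g.y) = _
      push_cast
      ring

end Torsion

/-- the equivalence with the product type. -/
def mdlEquiv (p d e f : ℕ) : (ZMod (p ^ d) × ZMod (p ^ e)) ≃ Mdl p d e f :=
  ⟨fun z => ⟨z.1, z.2⟩, fun g => (g.x, g.y), fun z => rfl, fun g => rfl⟩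

instance [hF : Fact (Good p d e f)] : Finite (Mdl p d e f) := by
  haveI := hF.out.nzd
  haveI := hF.out.nze
  exact Finite.of_equiv _ (mdlEquiv p d e f)

section Intersection
variable [hF : Fact (Good p d e f)]
open Subgroup

/-- `α^(p^(d-1))` computed, when `p^(e-d) ∣ i`. -/
lemma E_comp (hG : Good p d e f) {i : ℤ} (j : ℤ) :
    (elt p d e f i j) ^ (p ^ (d - 1))
      = ⟨((j * ∑ t ∈ range (p ^ (d-1)), (qq p e f i) ^ t : ℤ) : ZMod (p ^ d)),
          (((p:ℤ) ^ (d-1) * i : ℤ) : ZMod (p ^ e))⟩ := by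
  rw [elt_pow]
  ext
  · rfl
  · push_cast; ring_nf

lemma pd1_pow_split (hG : Good p d e f) : (p:ℤ) ^ d = (p:ℤ) ^ (d-1) * p := by
  rw [← pow_succ]
  congr 1
  have := hG.hfd; omega

lemma pe1_pow_split (hG : Good p d e f) : (p:ℤ) ^ e = (p:ℤ) ^ (e-1) * p := by
  rw [← pow_succ]
  congr 1
  have := hG.hde; omega

/-- torsion of the E element. -/
lemma E_tor_x (hG : Good p d e f) {i j : ℤ} :
    (p : ZMod (p ^ d)) * ((j * ∑ t ∈ range (p ^ (d-1)), (qq p e f i) ^ t : ℤ) : ZMod (p ^ d)) = 0 := by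
  obtain ⟨w, hw, -⟩ := S_exact hG i (d - 1)
  have : ((p:ℕ):ZMod (p^d)) * ((j * ∑ t ∈ range (p ^ (d-1)), (qq p e f i) ^ t : ℤ) : ZMod (p ^ d))
      = (((p:ℤ) * (j * ∑ t ∈ range (p ^ (d-1)), (qq p e f i) ^ t) : ℤ) : ZMod (p ^ d)) := by
    push_cast; ring
  rw [this, cast_zero_iff_d, hw, pd1_pow_split hG]
  ring_nf
  exact ⟨j * w, by ring⟩

lemma E_tor_y (hG : Good p d e f) {i : ℤ} (hi : (p:ℤ) ^ (e - d) ∣ i) :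
    (p : ZMod (p ^ e)) * (((p:ℤ) ^ (d-1) * i : ℤ) : ZMod (p ^ e)) = 0 := by
  have : ((p:ℕ):ZMod (p^e)) * (((p:ℤ)^(d-1) * i : ℤ) : ZMod (p ^ e))
      = (((p:ℤ) * ((p:ℤ)^(d-1) * i) : ℤ) : ZMod (p ^ e)) := by push_cast; ring
  rw [this, cast_zero_iff_e]
  obtain ⟨i', rfl⟩ := hi
  have hsplit : (p:ℤ) ^ e = ((p:ℤ) * (p:ℤ)^(d-1)) * (p:ℤ)^(e-d) := by
    rw [mul_assoc, ← pow_add, ← pow_succ']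
    congr 1
    have := hG.hfd; have := hG.hde; omega
  rw [hsplit]
  exact ⟨i', by ring⟩

/-- If `p ∤ j` (and the order conditions), the intersection is trivial. -/
lemma inter_bot (hG : Good p d e f) {i j k l : ℤ} (hi : (p:ℤ) ^ (e - d) ∣ i)
    (hj : ¬ (p:ℤ) ∣ j) (hk : ¬ (p:ℤ) ∣ k) :
    zpowers (elt p d e f i j) ⊓ zpowers (elt p d e f k l) = ⊥ := by
  haveI : Fact p.Prime := ⟨hG.hP⟩
  have hpz : ((p:ℤ)) ≠ 0 := by exact_mod_cast hG.hP.pos.ne'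
  have hordα : orderOf (elt p d e f i j) = p ^ d := orderOf_elt_alpha hG hi hj
  rw [eq_bot_iff]
  intro g hg
  rw [Subgroup.mem_inf] at hg
  obtain ⟨hga, hgb⟩ := hg
  rw [Subgroup.mem_bot]
  by_contra hg1
  -- order of g is a nontrivial power of p
  have hdvd : orderOf g ∣ p ^ d := hordα ▸ orderOf_dvd_of_mem_zpowers hga
  obtain ⟨t, htd, hot⟩ := (Nat.dvd_prime_pow hG.hP).mp hdvd
  have ht1 : 1 ≤ t := by
    rcases Nat.eq_zero_or_pos t with h0 | h; swap; · exact h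
    rw [h0, pow_zero] at hot
    exact absurd (orderOf_eq_one_iff.mp hot) hg1
  -- the element h of order p
  obtain ⟨h, hh⟩ : ∃ h : Mdl p d e f, h = g ^ (p ^ (t - 1)) := ⟨_, rfl⟩
  have hordh : orderOf h = p := by
    have hgcd : Nat.gcd (p^t) (p^(t-1)) = p^(t-1) :=
      Nat.gcd_eq_right (pow_dvd_pow _ (by omega))
    rw [hh, orderOf_pow, hot, hgcd]
    have hsplit : p ^ t = p ^ (t-1) * p := by rw [← pow_succ]; congr 1; omega
    rw [hsplit, Nat.mul_div_cancel_left _ (pow_pos hG.hP.pos _)]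
  have hh1 : h ≠ 1 := by
    intro hcon
    rw [hcon, orderOf_one] at hordh
    exact hG.hP.one_lt.ne' hordh.symm
  have hha : h ∈ zpowers (elt p d e f i j) := hh ▸ Subgroup.pow_mem _ hga _
  have hhb : h ∈ zpowers (elt p d e f k l) := hh ▸ Subgroup.pow_mem _ hgb _
  have hhp : h ^ (p : ℕ) = 1 := by
    calc h ^ (p:ℕ) = h ^ orderOf h := by rw [hordh]
    _ = 1 := pow_orderOf_eq_one h
  -- From the α side: h = (α^(p^(d-1)))^s with p ∤ s
  obtain ⟨m, hm⟩ := Subgroup.mem_zpowers_iff.mp hha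
  have hmp : (elt p d e f i j) ^ (m * p) = 1 := by
    rw [zpow_mul, hm]
    exact_mod_cast hhp
  have hdm : ((p:ℤ)) ^ (d-1) ∣ m := by
    have h1 := (orderOf_dvd_iff_zpow_eq_one).mpr hmp
    rw [hordα] at h1
    have h2 : (p:ℤ)^(d-1) * (p:ℤ) ∣ m * (p:ℤ) := by
      calc (p:ℤ)^(d-1) * (p:ℤ) = ((p^d : ℕ) : ℤ) := by push_cast; rw [← pd1_pow_split hG]
      _ ∣ m * (p:ℤ) := h1
    exact (mul_dvd_mul_iff_right hpz).mp h2
  obtain ⟨s, rfl⟩ := hdm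
  have hps : ¬ (p:ℤ) ∣ s := by
    intro hdvd'
    obtain ⟨s0, rfl⟩ := hdvd'
    apply hh1
    rw [← hm]
    have heq : (p:ℤ)^(d-1) * ((p:ℤ) * s0) = ((p^d : ℕ) : ℤ) * s0 := by
      push_cast; rw [pd1_pow_split hG]; ring
    rw [heq, zpow_mul, zpow_natCast, (elt_pow_pd_eq_one hG i j).mpr hi, one_zpow]
  -- compute h.x from the α side
  have hE : (elt p d e f i j) ^ ((p:ℤ) ^ (d-1) * s)
      = ((elt p d e f i j) ^ (p ^ (d-1) : ℕ)) ^ s := by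
    rw [← zpow_natCast (elt p d e f i j) (p ^ (d-1)), ← zpow_mul]
    congr 1
  rw [hE, E_comp hG] at hm
  have hmx : h.x = ((s * (j * ∑ t ∈ range (p ^ (d-1)), (qq p e f i) ^ t) : ℤ) : ZMod (p ^ d)) := by
    rw [← hm, tor_zpow hG _ (E_tor_x hG) (E_tor_y hG hi)]
    show (s : ZMod (p^d)) * _ = _
    push_cast; ring
  -- From the β side: h.x = 0
  obtain ⟨n, hn⟩ := Subgroup.mem_zpowers_iff.mp hhb
  have hordβ : orderOf (elt p d e f k l) = p ^ e := (orderOf_elt_beta hG k l).mpr hk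
  have hnp : (elt p d e f k l) ^ (n * p) = 1 := by
    rw [zpow_mul, hn]
    exact_mod_cast hhp
  have hdn : ((p:ℤ)) ^ (e-1) ∣ n := by
    have h1 := (orderOf_dvd_iff_zpow_eq_one).mpr hnp
    rw [hordβ] at h1
    have h2 : (p:ℤ)^(e-1) * (p:ℤ) ∣ n * (p:ℤ) := by
      calc (p:ℤ)^(e-1) * (p:ℤ) = ((p^e : ℕ) : ℤ) := by push_cast; rw [← pe1_pow_split hG]
      _ ∣ n * (p:ℤ) := h1
    exact (mul_dvd_mul_iff_right hpz).mp h2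
  obtain ⟨s', rfl⟩ := hdn
  have hFeq : (elt p d e f k l) ^ ((p:ℤ) ^ (e-1) * s')
      = ((elt p d e f k l) ^ (p ^ (e-1) : ℕ)) ^ s' := by
    rw [← zpow_natCast (elt p d e f k l) (p ^ (e-1)), ← zpow_mul]
    congr 1
  rw [hFeq, elt_pow] at hn
  have hde1 : d ≤ e - 1 := by have := hG.hde; omega
  have hFx0 : ((l * ∑ t ∈ range (p ^ (e-1)), (qq p e f k) ^ t : ℤ) : ZMod (p ^ d)) = 0 := by
    rw [Int.cast_mul, S_dvd hG k hde1, mul_zero]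
  have hFy_tor : (p : ZMod (p ^ e)) * ((((p ^ (e-1) : ℕ):ℤ) * k : ℤ) : ZMod (p ^ e)) = 0 := by
    have hcast : ((p:ℕ):ZMod (p^e)) * ((((p ^ (e-1) : ℕ):ℤ) * k : ℤ) : ZMod (p ^ e))
        = (((p:ℤ) * (((p ^ (e-1) : ℕ):ℤ) * k) : ℤ) : ZMod (p ^ e)) := by push_cast; ring
    rw [hcast, cast_zero_iff_e, pe1_pow_split hG]
    exact ⟨k, by push_cast; ring⟩
  have hmx0 : h.x = 0 := by
    rw [← hn, tor_zpow hG _ (by rw [hFx0, mul_zero]) hFy_tor]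
    show (s' : ZMod (p^d)) * _ = 0
    rw [hFx0, mul_zero]
  -- contradiction
  obtain ⟨w, hw, hpw⟩ := S_exact hG i (d - 1)
  rw [hmx0, eq_comm, cast_zero_iff_d, hw] at hmx
  have hfinal : (p:ℤ)^(d-1) * (p:ℤ) ∣ (p:ℤ)^(d-1) * (s * j * w) := by
    calc (p:ℤ)^(d-1) * (p:ℤ) = (p:ℤ)^d := (pd1_pow_split hG).symm
    _ ∣ s * (j * ((p:ℤ)^(d-1) * w)) := hmx
    _ = (p:ℤ)^(d-1) * (s * j * w) := by ring
  have hpsjw : (p:ℤ) ∣ s * j * w :=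
    (mul_dvd_mul_iff_left (pow_ne_zero _ hpz)).mp hfinal
  have hip : Prime (p:ℤ) := Nat.prime_iff_prime_int.mp hG.hP
  rcases hip.dvd_mul.mp hpsjw with h' | h'
  · rcases hip.dvd_mul.mp h' with h'' | h''
    · exact hps h''
    · exact hj h''
  · exact hpw h'

end Intersection

section Forward
variable [hF : Fact (Good p d e f)]
open Subgroup

/-- If `p ∣ j` while the orders are right, the intersection is nontrivial. -/
lemma p_dvd_j_inter (hG : Good p d e f) {i j k l : ℤ} (hi : (p:ℤ) ^ (e - d) ∣ i)
    (hk : ¬ (p:ℤ) ∣ k) (hj : (p:ℤ) ∣ j)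
    (hord : orderOf (elt p d e f i j) = p ^ d) :
    zpowers (elt p d e f i j) ⊓ zpowers (elt p d e f k l) ≠ ⊥ := by
  haveI : Fact p.Prime := ⟨hG.hP⟩
  haveI : NeZero p := ⟨hG.hP.pos.ne'⟩
  have hpz : ((p:ℤ)) ≠ 0 := by exact_mod_cast hG.hP.pos.ne'
  obtain ⟨i', hi'⟩ := hi
  obtain ⟨j', rfl⟩ := hj
  -- the element E = α^(p^(d-1)) is nontrivial
  obtain ⟨E, hE⟩ : ∃ E : Mdl p d e f, E = (elt p d e f i ((p:ℤ) * j')) ^ (p ^ (d - 1)) := ⟨_, rfl⟩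
  have hE1 : E ≠ 1 := by
    intro hcon
    have hdvd : orderOf (elt p d e f i ((p:ℤ) * j')) ∣ p ^ (d-1) :=
      orderOf_dvd_of_pow_eq_one (hE ▸ hcon)
    rw [hord] at hdvd
    have := Nat.le_of_dvd (pow_pos hG.hP.pos _) hdvd
    have h2 := Nat.pow_lt_pow_right hG.hP.one_lt (by have := hG.hfd; omega : d - 1 < d)
    omega
  -- E.x = 0
  obtain ⟨w, hw, hpw⟩ := S_exact hG i (d - 1)
  have hEx : E.x = 0 := by
    rw [hE, E_comp hG]
    show ((((p:ℤ)*j') * ∑ t ∈ range (p ^ (d-1)), (qq p e f i) ^ t : ℤ) : ZMod (p ^ d)) = 0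
    rw [cast_zero_iff_d, hw, pd1_pow_split hG]
    exact ⟨j' * w, by ring⟩
  have hEy : E.y = (((p:ℤ) ^ (d-1) * i : ℤ) : ZMod (p ^ e)) := by rw [hE, E_comp hG]
  -- choose the exponent for β
  obtain ⟨n', hn'⟩ : ∃ n' : ℕ, (p:ℤ) ∣ (n' : ℤ) * k - i' := by
    have hkk : (k : ZMod p) ≠ 0 := fun hc =>
      hk ((ZMod.intCast_zmod_eq_zero_iff_dvd k p).mp hc)
    refine ⟨(((k : ZMod p))⁻¹ * (i' : ZMod p)).val, ?_⟩
    have : (((((k : ZMod p))⁻¹ * (i' : ZMod p)).val : ℤ) * k - i' : ℤ) = 0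
        ∨ ((((((k : ZMod p))⁻¹ * (i' : ZMod p)).val : ℤ) * k - i' : ℤ) : ZMod p) = 0 := by
      right
      push_cast
      rw [ZMod.natCast_val, ZMod.cast_id]
      field_simp
      simp
    rcases this with h0 | h0
    · exact ⟨0, by omega⟩
    · exact (ZMod.intCast_zmod_eq_zero_iff_dvd _ p).mp h0
  -- E = β^(p^(e-1) * n')
  have hmem : E ∈ zpowers (elt p d e f k l) := by
    rw [Subgroup.mem_zpowers_iff]
    refine ⟨((p ^ (e-1) * n' : ℕ) : ℤ), ?_⟩
    rw [zpow_natCast, elt_pow]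
    have hde1 : d ≤ e - 1 := by have := hG.hde; omega
    ext
    · show ((l * ∑ t ∈ range (p ^ (e-1) * n'), (qq p e f k) ^ t : ℤ) : ZMod (p ^ d)) = E.x
      rw [hEx, cast_zero_iff_d]
      exact Dvd.dvd.mul_left
        (dvd_trans (S_dvd_int hG k hde1) (dvd_geomS _ _ _ ⟨n', rfl⟩)) l
    · show ((((p ^ (e-1) * n' : ℕ):ℤ) * k : ℤ) : ZMod (p ^ e)) = E.y
      rw [hEy]
      rw [← sub_eq_zero, ← Int.cast_sub, cast_zero_iff_e]
      have hsplit : (p:ℤ)^(d-1) * (p:ℤ)^(e-d) = (p:ℤ)^(e-1) := by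
        rw [← pow_add]; congr 1; have := hG.hfd; have := hG.hde; omega
      have hexp : (((p ^ (e-1) * n' : ℕ):ℤ) * k : ℤ) - (p:ℤ)^(d-1) * i
          = (p:ℤ)^(e-1) * ((n' : ℤ) * k - i') := by
        rw [hi', ← mul_assoc, hsplit]
        push_cast
        ring
      rw [hexp, pe1_pow_split hG]
      exact mul_dvd_mul_left _ hn'
  have hmema : E ∈ zpowers (elt p d e f i ((p:ℤ) * j')) := by
    rw [hE]
    exact Subgroup.pow_mem _ (Subgroup.mem_zpowers _) _
  intro hbot
  have : E ∈ (⊥ : Subgroup (Mdl p d e f)) := hbot ▸ Subgroup.mem_inf.mpr ⟨hmema, hmem⟩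
  exact hE1 (Subgroup.mem_bot.mp this)

/-- cardinality of the model. -/
lemma mdl_card (hG : Good p d e f) : Nat.card (Mdl p d e f) = p ^ d * p ^ e := by
  haveI := hG.nzd
  haveI := hG.nze
  rw [← Nat.card_congr (mdlEquiv p d e f), Nat.card_prod, Nat.card_zmod, Nat.card_zmod]

/-- surjectivity of the product decomposition. -/
lemma decomp (hG : Good p d e f) {i j k l : ℤ} (hi : (p:ℤ) ^ (e - d) ∣ i)
    (hj : ¬ (p:ℤ) ∣ j) (hk : ¬ (p:ℤ) ∣ k) (g : Mdl p d e f) :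
    ∃ m n : ℤ, g = (elt p d e f i j) ^ m * (elt p d e f k l) ^ n := by
  have hcard : Nat.card (zpowers (elt p d e f i j)) * Nat.card (zpowers (elt p d e f k l))
      = Nat.card (Mdl p d e f) := by
    rw [Nat.card_zpowers, Nat.card_zpowers, orderOf_elt_alpha hG hi hj,
      (orderOf_elt_beta hG k l).mpr hk, mdl_card hG]
  have hdisj : Disjoint (zpowers (elt p d e f i j)) (zpowers (elt p d e f k l)) :=
    disjoint_iff.mpr (inter_bot hG hi hj hk)
  have hcompl := Subgroup.isComplement'_of_card_mul_and_disjoint hcard hdisj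
  obtain ⟨⟨x, y⟩, hxy⟩ := hcompl.existsUnique g |>.exists
  obtain ⟨m, hm⟩ := Subgroup.mem_zpowers_iff.mp x.2
  obtain ⟨n, hn⟩ := Subgroup.mem_zpowers_iff.mp y.2
  exact ⟨m, n, by rw [hm, hn]; exact hxy.symm⟩

end Forward

section ModelIff
variable [hF : Fact (Good p d e f)]
open Subgroup

theorem model_iff (hG : Good p d e f) (i j k l : ℤ) :
    IsExactBicyclicPair (p ^ d) (p ^ e) (elt p d e f i j) (elt p d e f k l)
      ↔ ((p : ℤ) ^ (e - d) ∣ i ∧ ¬ (p : ℤ) ∣ j * k) := by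
  have hip : Prime (p:ℤ) := Nat.prime_iff_prime_int.mp hG.hP
  constructor
  · rintro ⟨h1, h2, h3, h4⟩
    have hi : (p:ℤ) ^ (e - d) ∣ i :=
      (elt_pow_pd_eq_one hG i j).mp (by rw [← h1]; exact pow_orderOf_eq_one _)
    have hk : ¬ (p:ℤ) ∣ k := (orderOf_elt_beta hG k l).mp h2
    have hj : ¬ (p:ℤ) ∣ j := fun hj => p_dvd_j_inter hG hi hk hj h1 h3
    refine ⟨hi, fun hjk => ?_⟩
    rcases hip.dvd_mul.mp hjk with h' | h'
    · exact hj h'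
    · exact hk h'
  · rintro ⟨hi, hjk⟩
    have hj : ¬ (p:ℤ) ∣ j := fun h => hjk (h.mul_right k)
    have hk : ¬ (p:ℤ) ∣ k := fun h => hjk (h.mul_left j)
    exact ⟨orderOf_elt_alpha hG hi hj, (orderOf_elt_beta hG k l).mpr hk,
      inter_bot hG hi hj hk, fun g => decomp hG hi hj hk g⟩

end ModelIff

lemma pow_mod_eq {G : Type*} [Group G] (g : G) {N : ℕ} (hg : g ^ N = 1) (m : ℕ) :
    g ^ (m % N) = g ^ m := by
  conv_rhs => rw [← Nat.div_add_mod m N]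
  rw [pow_add, pow_mul, hg, one_pow, one_mul]

section Iso
variable [hF : Fact (Good p d e f)]

lemma AA_ord : (AA : Mdl p d e f) ^ (p ^ d) = 1 := by
  rw [AA_pow, one_def]
  ext
  · show ((p ^ d : ℕ) : ZMod (p ^ d)) = 0
    exact ZMod.natCast_self _
  · rfl

lemma BB_ord : (BB : Mdl p d e f) ^ (p ^ e) = 1 := by
  rw [BB_pow, one_def]
  ext
  · rfl
  · show ((p ^ e : ℕ) : ZMod (p ^ e)) = 0
    exact ZMod.natCast_self _

lemma BAB : (BB : Mdl p d e f)⁻¹ * AA * BB = AA ^ (1 + p ^ f) := by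
  have hG := hF.out
  haveI : Fact (1 < p ^ e) := ⟨hG.hpe1⟩
  rw [AA_pow]
  ext
  · show chi p d e f (BB : Mdl p d e f).y * (chi p d e f (AA : Mdl p d e f).y *
        (-(chi p d e f (-(BB : Mdl p d e f).y) * (BB : Mdl p d e f).x)) + (AA : Mdl p d e f).x)
        + (BB : Mdl p d e f).x = ((1 + p ^ f : ℕ) : ZMod (p ^ d))
    show chi p d e f 1 * (chi p d e f 0 * (-(chi p d e f (-(1 : ZMod (p^e))) * 0)) + 1) + 0
        = ((1 + p ^ f : ℕ) : ZMod (p ^ d))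
    rw [chi_zero hG, mul_zero, neg_zero, one_mul, zero_add, add_zero, mul_one]
    rw [chi, ZMod.val_one, pow_one, rr]
  · show ((-(1 : ZMod (p^e)) + 0) + 1 : ZMod (p^e)) = 0
    ring

/-- the generator images. -/
def phiFun (p d e f : ℕ) : Fin 2 → Mdl p d e f := fun x => if x = 0 then AA else BB

lemma phi_rels : ∀ r ∈ M2rels p d e f, FreeGroup.lift (phiFun p d e f) r = 1 := by
  intro r hr
  simp only [M2rels, Set.mem_insert_iff, Set.mem_singleton_iff] at hr
  rcases hr with rfl | rfl | rfl
  · rw [map_pow, FreeGroup.lift_apply_of]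
    show (AA : Mdl p d e f) ^ (p ^ d) = 1
    exact AA_ord
  · rw [map_pow, FreeGroup.lift_apply_of]
    show (BB : Mdl p d e f) ^ (p ^ e) = 1
    exact BB_ord
  · rw [map_mul, map_mul, map_mul, map_inv, map_inv, map_pow, FreeGroup.lift_apply_of,
      FreeGroup.lift_apply_of]
    show (BB : Mdl p d e f)⁻¹ * AA * BB * ((AA : Mdl p d e f) ^ (1 + p ^ f))⁻¹ = 1
    rw [mul_inv_eq_one, BAB]

/-- the homomorphism from the presented group to the model. -/
def Phi (p d e f : ℕ) [Fact (Good p d e f)] : M2 p d e f →* Mdl p d e f :=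
  PresentedGroup.toGroup (phi_rels (p := p) (d := d) (e := e) (f := f))

lemma Phi_a : Phi p d e f (M2a p d e f) = AA := by
  rw [M2a, Phi, PresentedGroup.toGroup.of]
  rfl

lemma Phi_b : Phi p d e f (M2b p d e f) = BB := by
  rw [M2b, Phi, PresentedGroup.toGroup.of]
  rfl

-- relations in M2
lemma M2_rel_one {r : FreeGroup (Fin 2)} (hr : r ∈ M2rels p d e f) :
    PresentedGroup.mk (M2rels p d e f) r = 1 :=
  (QuotientGroup.eq_one_iff r).mpr (Subgroup.subset_normalClosure hr)

lemma rel_a : (M2a p d e f) ^ (p ^ d) = 1 := by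
  have := M2_rel_one (p := p) (d := d) (e := e) (f := f)
    (Set.mem_insert _ {FreeGroup.of 1 ^ p ^ e,
      (FreeGroup.of 1)⁻¹ * FreeGroup.of 0 * FreeGroup.of 1 * (FreeGroup.of 0 ^ (1 + p ^ f))⁻¹})
  rw [map_pow] at this
  exact this

lemma rel_b : (M2b p d e f) ^ (p ^ e) = 1 := by
  have := M2_rel_one (p := p) (d := d) (e := e) (f := f)
    (r := FreeGroup.of 1 ^ p ^ e) (by simp [M2rels])
  rw [map_pow] at this
  exact this

lemma rel_c : (M2b p d e f)⁻¹ * M2a p d e f * M2b p d e f = (M2a p d e f) ^ (1 + p ^ f) := by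
  have := M2_rel_one (p := p) (d := d) (e := e) (f := f)
    (r := (FreeGroup.of 1)⁻¹ * FreeGroup.of 0 * FreeGroup.of 1
      * (FreeGroup.of 0 ^ (1 + p ^ f))⁻¹) (by simp [M2rels])
  rw [map_mul, map_mul, map_mul, map_inv, map_inv, map_pow, mul_inv_eq_one] at this
  exact this

lemma comm1 (m : ℕ) :
    (M2a p d e f) ^ m * M2b p d e f = M2b p d e f * (M2a p d e f) ^ ((1 + p ^ f) * m) := by
  have h1 : (M2b p d e f)⁻¹ * (M2a p d e f) ^ m * M2b p d e f
      = (M2a p d e f) ^ ((1 + p ^ f) * m) := by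
    have hc := conj_pow (i := m) (a := (M2b p d e f)⁻¹) (b := M2a p d e f)
    rw [inv_inv] at hc
    rw [← hc, rel_c, ← pow_mul]
  calc (M2a p d e f) ^ m * M2b p d e f
      = M2b p d e f * ((M2b p d e f)⁻¹ * (M2a p d e f) ^ m * M2b p d e f) := by group
  _ = M2b p d e f * (M2a p d e f) ^ ((1 + p ^ f) * m) := by rw [h1]

lemma comm2 (m n : ℕ) :
    (M2a p d e f) ^ m * (M2b p d e f) ^ n
      = (M2b p d e f) ^ n * (M2a p d e f) ^ (m * (1 + p ^ f) ^ n) := by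
  induction n with
  | zero => simp
  | succ n ih =>
    rw [pow_succ, ← mul_assoc, ih, mul_assoc, comm1, ← mul_assoc, ← pow_succ]
    congr 2
    ring

/-- the inverse map from the model to the presented group. -/
def Psi (p d e f : ℕ) (g : Mdl p d e f) : M2 p d e f :=
  (M2b p d e f) ^ (g.y.val) * (M2a p d e f) ^ (g.x.val)

lemma psi_mul (g h : Mdl p d e f) : Psi p d e f (g * h) = Psi p d e f g * Psi p d e f h := by
  have hG := hF.out
  haveI := hG.nzd
  haveI := hG.nze
  rw [Psi, Psi, Psi]
  show (M2b p d e f) ^ ((g.y + h.y).val) * (M2a p d e f) ^ ((chi p d e f h.y * g.x + h.x).val) = _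
  have hb : (M2b p d e f) ^ ((g.y + h.y).val) = (M2b p d e f) ^ (g.y.val + h.y.val) := by
    rw [ZMod.val_add]
    exact pow_mod_eq _ rel_b _
  have hx : chi p d e f h.y * g.x + h.x
      = (((1 + p ^ f) ^ h.y.val * g.x.val + h.x.val : ℕ) : ZMod (p^d)) := by
    rw [chi, rr]
    push_cast
    rw [ZMod.natCast_val, ZMod.natCast_val, ZMod.cast_id, ZMod.cast_id]
  have ha : (M2a p d e f) ^ ((chi p d e f h.y * g.x + h.x).val)
      = (M2a p d e f) ^ ((1 + p ^ f) ^ h.y.val * g.x.val + h.x.val) := by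
    rw [hx, ZMod.val_natCast]
    exact pow_mod_eq _ rel_a _
  rw [hb, ha, pow_add, pow_add]
  calc (M2b p d e f) ^ g.y.val * (M2b p d e f) ^ h.y.val
        * ((M2a p d e f) ^ ((1 + p ^ f) ^ h.y.val * g.x.val) * (M2a p d e f) ^ h.x.val)
      = (M2b p d e f) ^ g.y.val
        * ((M2b p d e f) ^ h.y.val * (M2a p d e f) ^ (g.x.val * (1 + p ^ f) ^ h.y.val))
        * (M2a p d e f) ^ h.x.val := by
        rw [Nat.mul_comm ((1 + p ^ f) ^ h.y.val) (g.x.val)]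
        group
  _ = (M2b p d e f) ^ g.y.val
        * ((M2a p d e f) ^ g.x.val * (M2b p d e f) ^ h.y.val)
        * (M2a p d e f) ^ h.x.val := by rw [← comm2]
  _ = _ := by group

/-- `Psi` as a homomorphism. -/
def PsiHom (p d e f : ℕ) [Fact (Good p d e f)] : Mdl p d e f →* M2 p d e f :=
  MonoidHom.mk' (Psi p d e f) psi_mul

lemma psi_phi (x : M2 p d e f) : PsiHom p d e f (Phi p d e f x) = x := by
  have hG := hF.out
  haveI := hG.nzd
  haveI := hG.nze
  haveI : Fact (1 < p ^ d) := ⟨hG.hpd1⟩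
  haveI : Fact (1 < p ^ e) := ⟨hG.hpe1⟩
  have hext : (PsiHom p d e f).comp (Phi p d e f) = MonoidHom.id (M2 p d e f) := by
    apply PresentedGroup.ext
    intro x
    fin_cases x
    · show PsiHom p d e f (Phi p d e f (M2a p d e f)) = M2a p d e f
      rw [Phi_a]
      show (M2b p d e f) ^ ((0 : ZMod (p^e)).val) * (M2a p d e f) ^ ((1 : ZMod (p^d)).val)
          = M2a p d e f
      rw [ZMod.val_zero, ZMod.val_one, pow_zero, pow_one, one_mul]
    · show PsiHom p d e f (Phi p d e f (M2b p d e f)) = M2b p d e f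
      rw [Phi_b]
      show (M2b p d e f) ^ ((1 : ZMod (p^e)).val) * (M2a p d e f) ^ ((0 : ZMod (p^d)).val)
          = M2b p d e f
      rw [ZMod.val_zero, ZMod.val_one, pow_zero, pow_one, mul_one]
  calc PsiHom p d e f (Phi p d e f x) = ((PsiHom p d e f).comp (Phi p d e f)) x := rfl
  _ = x := by rw [hext]; rfl

lemma phi_surj : Function.Surjective (Phi p d e f) := by
  have hG := hF.out
  haveI := hG.nzd
  haveI := hG.nze
  intro g
  refine ⟨(M2b p d e f) ^ (g.y.val) * (M2a p d e f) ^ (g.x.val), ?_⟩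
  rw [map_mul, map_pow, map_pow, Phi_a, Phi_b, AA_pow, BB_pow, mul_def]
  ext
  · show chi p d e f 0 * 0 + ((g.x.val : ℕ) : ZMod (p^d)) = g.x
    rw [chi_zero hG, mul_zero, zero_add, ZMod.natCast_val, ZMod.cast_id]
  · show ((g.y.val : ℕ) : ZMod (p^e)) + 0 = g.y
    rw [add_zero, ZMod.natCast_val, ZMod.cast_id]

lemma phi_inj : Function.Injective (Phi p d e f) := by
  intro x y h
  have := congrArg (PsiHom p d e f) h
  rwa [psi_phi, psi_phi] at this

/-- the isomorphism. -/
noncomputable def PhiEquiv (p d e f : ℕ) [Fact (Good p d e f)] : M2 p d e f ≃* Mdl p d e f :=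
  MulEquiv.ofBijective (Phi p d e f) ⟨phi_inj, phi_surj⟩

end Iso

end B7

/-- transport of the bicyclic-pair property along an isomorphism. -/
lemma bicyclic_map {G H : Type*} [Group G] [Group H] (eqv : G ≃* H) (m n : ℕ) (α β : G) :
    IsExactBicyclicPair m n α β ↔ IsExactBicyclicPair m n (eqv α) (eqv β) := by
  have hinj : Function.Injective eqv.toMonoidHom := eqv.injective
  have hco : ∀ x : G, eqv x = eqv.toMonoidHom x := fun _ => rfl
  simp only [hco]
  constructor
  · rintro ⟨h1, h2, h3, h4⟩
    refine ⟨by rw [orderOf_injective _ hinj, h1], by rw [orderOf_injective _ hinj, h2], ?_, ?_⟩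
    · rw [← MonoidHom.map_zpowers, ← MonoidHom.map_zpowers, ← Subgroup.map_inf _ _ _ hinj, h3]
      exact Subgroup.map_bot _
    · intro g
      obtain ⟨x, rfl⟩ := eqv.surjective g
      obtain ⟨i, j, hij⟩ := h4 x
      refine ⟨i, j, ?_⟩
      rw [hco, hij, map_mul, map_zpow, map_zpow]
  · rintro ⟨h1, h2, h3, h4⟩
    refine ⟨by rw [← h1, orderOf_injective _ hinj], by rw [← h2, orderOf_injective _ hinj],
      ?_, ?_⟩
    · rw [← MonoidHom.map_zpowers, ← MonoidHom.map_zpowers, ← Subgroup.map_inf _ _ _ hinj] at h3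
      exact (Subgroup.map_eq_bot_iff_of_injective _ hinj).mp h3
    · intro g
      obtain ⟨i, j, hij⟩ := h4 (eqv.toMonoidHom g)
      refine ⟨i, j, hinj ?_⟩
      rw [map_mul, map_zpow, map_zpow]
      exact hij

/-- For `G = M₂(p,d,e,f)` with `1 ≤ f < d < e` and canonical generators
`a, b`, and integers `i, j, k, l`, the pair `(bⁱaʲ, bᵏaˡ)` is an exact `(p^d,p^e)`-bicyclic
pair of `G` iff `p^(e-d) ∣ i` and `p ∤ jk`. -/
theorem stmt_7 (p d e f : ℕ) (hp : p.Prime) (hodd : Odd p)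
    (hf : 0 < f) (hfd : f < d) (hde : d < e) (i j k l : ℤ) :
    IsExactBicyclicPair (p ^ d) (p ^ e)
        (M2b p d e f ^ i * M2a p d e f ^ j) (M2b p d e f ^ k * M2a p d e f ^ l) ↔
      ((p : ℤ) ^ (e - d) ∣ i ∧ ¬ (p : ℤ) ∣ j * k) := by
  haveI : Fact (B7.Good p d e f) := ⟨hp, hodd, hf, hfd, hde⟩
  rw [bicyclic_map (B7.PhiEquiv p d e f)]
  rw [map_mul, map_mul, map_zpow, map_zpow, map_zpow, map_zpow]
  have hA : B7.PhiEquiv p d e f (M2a p d e f) = B7.AA := B7.Phi_a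
  have hB : B7.PhiEquiv p d e f (M2b p d e f) = B7.BB := B7.Phi_b
  rw [hA, hB, B7.BA_zpow, B7.BA_zpow]
  exact B7.model_iff Fact.out i j k l
end
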